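/- Let f : [0,T) × [0,1] → ℝⁿ be a smooth solution of ∂ₜf = −∇ₛ²κ + λ(t)κ − ½|κ|²κ + φτ on (0,T) × [0,1] (φ a smooth scalar function, λ : [0,T) → ℝ), subject to the boundary conditions f(t,1) = P for a fixed point P ∈ ℝⁿ and κ(t,1) = 0 for all t. Then φ(t,1) = 0 and ∇ₛ^{2l}κ(t,1) = 0 for every l ∈ ℕ₀ and every t ∈ (0,T). -/

import Mathlib

open Set MeasureTheory
open scoped RealInnerProductSpace

noncomputable section

/-- Arc-length derivative `∂ₛ g = |∂ₓ f|⁻¹ ∂ₓ g` along the curve `f`. -/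
def sDeriv {n : ℕ} {F : Type*} [NormedAddCommGroup F] [NormedSpace ℝ F]
    (f : ℝ → EuclideanSpace ℝ (Fin n)) (g : ℝ → F) (x : ℝ) : F :=
  ‖deriv f x‖⁻¹ • deriv g x

/-- The unit tangent `τ = ∂ₛ f`. -/
def tau {n : ℕ} (f : ℝ → EuclideanSpace ℝ (Fin n)) : ℝ → EuclideanSpace ℝ (Fin n) :=
  sDeriv f f

/-- The curvature vector `κ = ∂ₛ² f`. -/
def kappa {n : ℕ} (f : ℝ → EuclideanSpace ℝ (Fin n)) : ℝ → EuclideanSpace ℝ (Fin n) :=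
  sDeriv f (tau f)

/-- Normal projection of the arc-length derivative: `∇ₛψ = ∂ₛψ − ⟨∂ₛψ, τ⟩ τ`. -/
def nablaS {n : ℕ} (f ψ : ℝ → EuclideanSpace ℝ (Fin n)) (x : ℝ) :
    EuclideanSpace ℝ (Fin n) :=
  sDeriv f ψ x - ⟪sDeriv f ψ x, tau f x⟫ • tau f x

/-- Iterated normal arc-length derivative `∇ₛ^m`. -/
def nablaSIter {n : ℕ} (f : ℝ → EuclideanSpace ℝ (Fin n)) :
    ℕ → (ℝ → EuclideanSpace ℝ (Fin n)) → ℝ → EuclideanSpace ℝ (Fin n)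
  | 0, ψ => ψ
  | m + 1, ψ => nablaS f (nablaSIter f m ψ)

/-- Partial time derivative of a time-dependent field. -/
def pT {F : Type*} [NormedAddCommGroup F] [NormedSpace ℝ F]
    (g : ℝ → ℝ → F) (t x : ℝ) : F :=
  deriv (fun s => g s x) t

namespace ElAux

variable {F : Type*} [NormedAddCommGroup F] [NormedSpace ℝ F]
variable {G : Type*} [NormedAddCommGroup G] [NormedSpace ℝ G]

/-- partial derivative in second (space) variable -/
def Dx (g : ℝ × ℝ → F) (p : ℝ × ℝ) : F := deriv (fun x => g (p.1, x)) p.2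

/-- partial derivative in first (time) variable -/
def Dt (g : ℝ × ℝ → F) (p : ℝ × ℝ) : F := deriv (fun t => g (t, p.2)) p.1

theorem hasDerivAt_slice_x {g : ℝ × ℝ → F} {p : ℝ × ℝ} (hg : DifferentiableAt ℝ g p) :
    HasDerivAt (fun x => g (p.1, x)) (fderiv ℝ g p (0, 1)) p.2 := by
  have h1 : HasDerivAt (fun x : ℝ => ((p.1, x) : ℝ × ℝ)) ((0 : ℝ), (1 : ℝ)) p.2 :=
    (hasDerivAt_const _ _).prodMk (hasDerivAt_id _)
  have h2 := hg.hasFDerivAt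
  rw [show p = ((p.1, p.2) : ℝ × ℝ) from rfl] at h2
  exact h2.comp_hasDerivAt p.2 h1

theorem hasDerivAt_slice_t {g : ℝ × ℝ → F} {p : ℝ × ℝ} (hg : DifferentiableAt ℝ g p) :
    HasDerivAt (fun t => g (t, p.2)) (fderiv ℝ g p (1, 0)) p.1 := by
  have h1 : HasDerivAt (fun t : ℝ => ((t, p.2) : ℝ × ℝ)) ((1 : ℝ), (0 : ℝ)) p.1 :=
    (hasDerivAt_id _).prodMk (hasDerivAt_const _ _)
  have h2 := hg.hasFDerivAt
  rw [show p = ((p.1, p.2) : ℝ × ℝ) from rfl] at h2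
  exact h2.comp_hasDerivAt p.1 h1

theorem Dx_eq_fderiv {g : ℝ × ℝ → F} {p : ℝ × ℝ} (hg : DifferentiableAt ℝ g p) :
    Dx g p = fderiv ℝ g p (0, 1) := (hasDerivAt_slice_x hg).deriv

theorem Dt_eq_fderiv {g : ℝ × ℝ → F} {p : ℝ × ℝ} (hg : DifferentiableAt ℝ g p) :
    Dt g p = fderiv ℝ g p (1, 0) := (hasDerivAt_slice_t hg).deriv

theorem Dx_congr_nhds {g g' : ℝ × ℝ → F} {p : ℝ × ℝ} (h : g =ᶠ[nhds p] g') :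
    Dx g p = Dx g' p := by
  apply Filter.EventuallyEq.deriv_eq
  have hc : Filter.Tendsto (fun x : ℝ => ((p.1, x) : ℝ × ℝ)) (nhds p.2) (nhds p) := by
    have : Filter.Tendsto (fun x : ℝ => ((p.1, x) : ℝ × ℝ)) (nhds p.2) (nhds (p.1, p.2)) :=
      (continuous_const.prodMk continuous_id).tendsto p.2
    simpa using this
  exact h.comp_tendsto hc

theorem Dt_congr_nhds {g g' : ℝ × ℝ → F} {p : ℝ × ℝ} (h : g =ᶠ[nhds p] g') :
    Dt g p = Dt g' p := by
  apply Filter.EventuallyEq.deriv_eq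
  have hc : Filter.Tendsto (fun t : ℝ => ((t, p.2) : ℝ × ℝ)) (nhds p.1) (nhds p) := by
    have : Filter.Tendsto (fun t : ℝ => ((t, p.2) : ℝ × ℝ)) (nhds p.1) (nhds (p.1, p.2)) :=
      (continuous_id.prodMk continuous_const).tendsto p.1
    simpa using this
  exact h.comp_tendsto hc

theorem diffAt {g : ℝ × ℝ → F} {s : Set (ℝ × ℝ)} (hg : ContDiffOn ℝ (⊤ : ℕ∞) g s)
    (hs : IsOpen s) {p : ℝ × ℝ} (hp : p ∈ s) : DifferentiableAt ℝ g p :=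
  (hg.contDiffAt (hs.mem_nhds hp)).differentiableAt (by norm_cast)

theorem contDiffOn_Dx {g : ℝ × ℝ → F} {s : Set (ℝ × ℝ)} (hs : IsOpen s)
    (hg : ContDiffOn ℝ (⊤ : ℕ∞) g s) : ContDiffOn ℝ (⊤ : ℕ∞) (Dx g) s := by
  have h1 : ContDiffOn ℝ (⊤ : ℕ∞) (fderiv ℝ g) s := hg.fderiv_of_isOpen hs (by simp)
  have h2 : ContDiffOn ℝ (⊤ : ℕ∞) (fun p => fderiv ℝ g p (0, 1)) s :=
    h1.clm_apply contDiffOn_const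
  exact h2.congr fun p hp => Dx_eq_fderiv (diffAt hg hs hp)

theorem contDiffOn_Dt {g : ℝ × ℝ → F} {s : Set (ℝ × ℝ)} (hs : IsOpen s)
    (hg : ContDiffOn ℝ (⊤ : ℕ∞) g s) : ContDiffOn ℝ (⊤ : ℕ∞) (Dt g) s := by
  have h1 : ContDiffOn ℝ (⊤ : ℕ∞) (fderiv ℝ g) s := hg.fderiv_of_isOpen hs (by simp)
  have h2 : ContDiffOn ℝ (⊤ : ℕ∞) (fun p => fderiv ℝ g p (1, 0)) s :=
    h1.clm_apply contDiffOn_const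
  exact h2.congr fun p hp => Dt_eq_fderiv (diffAt hg hs hp)

/-- Schwarz / Clairaut for our partial derivatives. -/
theorem Dt_Dx_comm {g : ℝ × ℝ → F} {s : Set (ℝ × ℝ)} (hs : IsOpen s)
    (hg : ContDiffOn ℝ (⊤ : ℕ∞) g s) {p : ℝ × ℝ} (hp : p ∈ s) :
    Dt (Dx g) p = Dx (Dt g) p := by
  have hA : ContDiffOn ℝ (⊤ : ℕ∞) (fderiv ℝ g) s := hg.fderiv_of_isOpen hs (by simp)
  have hsn : s ∈ nhds p := hs.mem_nhds hp
  have hev : ∀ᵉ (q ∈ s), True := fun q _ => trivial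
  have hdiff : ∀ q ∈ s, DifferentiableAt ℝ g q := fun q hq => diffAt hg hs hq
  -- rewrite Dx g as CLM application near p
  have e1 : Dx g =ᶠ[nhds p] fun q => fderiv ℝ g q (0, 1) := by
    filter_upwards [hsn] with q hq
    exact Dx_eq_fderiv (hdiff q hq)
  have e2 : Dt g =ᶠ[nhds p] fun q => fderiv ℝ g q (1, 0) := by
    filter_upwards [hsn] with q hq
    exact Dt_eq_fderiv (hdiff q hq)
  have hA1 : ContDiffOn ℝ (⊤ : ℕ∞) (fun q => fderiv ℝ g q (0, 1)) s :=
    hA.clm_apply contDiffOn_const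
  have hA2 : ContDiffOn ℝ (⊤ : ℕ∞) (fun q => fderiv ℝ g q (1, 0)) s :=
    hA.clm_apply contDiffOn_const
  have hAd : DifferentiableAt ℝ (fderiv ℝ g) p := diffAt hA hs hp
  have hf1 : fderiv ℝ (fun q => fderiv ℝ g q (0, 1)) p (1, 0)
      = fderiv ℝ (fderiv ℝ g) p (1, 0) (0, 1) := by
    have h2 := (hAd.hasFDerivAt.clm_apply (hasFDerivAt_const ((0 : ℝ), (1 : ℝ)) p)).fderiv
    rw [h2]; simp
  have hf2 : fderiv ℝ (fun q => fderiv ℝ g q (1, 0)) p (0, 1)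
      = fderiv ℝ (fderiv ℝ g) p (0, 1) (1, 0) := by
    have h2 := (hAd.hasFDerivAt.clm_apply (hasFDerivAt_const ((1 : ℝ), (0 : ℝ)) p)).fderiv
    rw [h2]; simp
  have hsymm : IsSymmSndFDerivAt ℝ g p :=
    (hg.contDiffAt hsn).isSymmSndFDerivAt (by simp only [minSmoothness_of_isRCLikeNormedField]; norm_cast)
  calc Dt (Dx g) p = Dt (fun q => fderiv ℝ g q (0, 1)) p := Dt_congr_nhds e1
    _ = fderiv ℝ (fun q => fderiv ℝ g q (0, 1)) p (1, 0) :=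
        Dt_eq_fderiv ((diffAt hA1 hs hp))
    _ = fderiv ℝ (fderiv ℝ g) p (1, 0) (0, 1) := hf1
    _ = fderiv ℝ (fderiv ℝ g) p (0, 1) (1, 0) := hsymm _ _
    _ = fderiv ℝ (fun q => fderiv ℝ g q (1, 0)) p (0, 1) := hf2.symm
    _ = Dx (Dt g) p := by
        rw [← Dx_eq_fderiv ((diffAt hA2 hs hp))]
        exact (Dx_congr_nhds e2).symm

section Rules

variable {H : Type*} [NormedAddCommGroup H] [InnerProductSpace ℝ H]
variable {a b : ℝ × ℝ → ℝ} {u w : ℝ × ℝ → H} {g g' : ℝ × ℝ → F} {p : ℝ × ℝ}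

theorem Dx_add (hu : DifferentiableAt ℝ g p) (hw : DifferentiableAt ℝ g' p) :
    Dx (fun q => g q + g' q) p = Dx g p + Dx g' p := by
  rw [Dx_eq_fderiv hu, Dx_eq_fderiv hw]; exact ((hasDerivAt_slice_x hu).add
    (hasDerivAt_slice_x hw)).deriv

theorem Dt_add (hu : DifferentiableAt ℝ g p) (hw : DifferentiableAt ℝ g' p) :
    Dt (fun q => g q + g' q) p = Dt g p + Dt g' p := by
  rw [Dt_eq_fderiv hu, Dt_eq_fderiv hw]; exact ((hasDerivAt_slice_t hu).add
    (hasDerivAt_slice_t hw)).deriv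

theorem Dx_sub (hu : DifferentiableAt ℝ g p) (hw : DifferentiableAt ℝ g' p) :
    Dx (fun q => g q - g' q) p = Dx g p - Dx g' p := by
  rw [Dx_eq_fderiv hu, Dx_eq_fderiv hw]; exact ((hasDerivAt_slice_x hu).sub
    (hasDerivAt_slice_x hw)).deriv

theorem Dt_sub (hu : DifferentiableAt ℝ g p) (hw : DifferentiableAt ℝ g' p) :
    Dt (fun q => g q - g' q) p = Dt g p - Dt g' p := by
  rw [Dt_eq_fderiv hu, Dt_eq_fderiv hw]; exact ((hasDerivAt_slice_t hu).sub
    (hasDerivAt_slice_t hw)).deriv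

theorem Dx_neg (hu : DifferentiableAt ℝ g p) :
    Dx (fun q => -g q) p = -Dx g p := by
  rw [Dx_eq_fderiv hu]; exact (hasDerivAt_slice_x hu).neg.deriv

theorem Dt_neg (hu : DifferentiableAt ℝ g p) :
    Dt (fun q => -g q) p = -Dt g p := by
  rw [Dt_eq_fderiv hu]; exact (hasDerivAt_slice_t hu).neg.deriv

theorem Dx_smul (ha : DifferentiableAt ℝ a p) (hu : DifferentiableAt ℝ g p) :
    Dx (fun q => a q • g q) p = a p • Dx g p + Dx a p • g p := by
  rw [Dx_eq_fderiv ha, Dx_eq_fderiv hu]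
  have h := ((hasDerivAt_slice_x ha).smul (hasDerivAt_slice_x hu)).deriv
  exact h

theorem Dt_smul (ha : DifferentiableAt ℝ a p) (hu : DifferentiableAt ℝ g p) :
    Dt (fun q => a q • g q) p = a p • Dt g p + Dt a p • g p := by
  rw [Dt_eq_fderiv ha, Dt_eq_fderiv hu]
  have h := ((hasDerivAt_slice_t ha).smul (hasDerivAt_slice_t hu)).deriv
  exact h

theorem Dx_mul (ha : DifferentiableAt ℝ a p) (hb : DifferentiableAt ℝ b p) :
    Dx (fun q => a q * b q) p = Dx a p * b p + a p * Dx b p := by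
  rw [Dx_eq_fderiv ha, Dx_eq_fderiv hb]; exact ((hasDerivAt_slice_x ha).mul
    (hasDerivAt_slice_x hb)).deriv

theorem Dt_mul (ha : DifferentiableAt ℝ a p) (hb : DifferentiableAt ℝ b p) :
    Dt (fun q => a q * b q) p = Dt a p * b p + a p * Dt b p := by
  rw [Dt_eq_fderiv ha, Dt_eq_fderiv hb]; exact ((hasDerivAt_slice_t ha).mul
    (hasDerivAt_slice_t hb)).deriv

theorem Dx_inner (hu : DifferentiableAt ℝ u p) (hw : DifferentiableAt ℝ w p) :
    Dx (fun q => ⟪u q, w q⟫) p = ⟪u p, Dx w p⟫ + ⟪Dx u p, w p⟫ := by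
  have h := HasDerivAt.inner ℝ (hasDerivAt_slice_x hu) (hasDerivAt_slice_x hw)
  have h2 := h.deriv
  simp only [Prod.mk.eta] at h2
  rw [Dx, show (fun x => (fun q => ⟪u q, w q⟫) (p.1, x)) = fun x => ⟪u (p.1, x), w (p.1, x)⟫
    from rfl, h2, Dx_eq_fderiv hu, Dx_eq_fderiv hw]

theorem Dt_inner (hu : DifferentiableAt ℝ u p) (hw : DifferentiableAt ℝ w p) :
    Dt (fun q => ⟪u q, w q⟫) p = ⟪u p, Dt w p⟫ + ⟪Dt u p, w p⟫ := by
  have h := HasDerivAt.inner ℝ (hasDerivAt_slice_t hu) (hasDerivAt_slice_t hw)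
  have h2 := h.deriv
  simp only [Prod.mk.eta] at h2
  rw [Dt, show (fun t => (fun q => ⟪u q, w q⟫) (t, p.2)) = fun t => ⟪u (t, p.2), w (t, p.2)⟫
    from rfl, h2, Dt_eq_fderiv hu, Dt_eq_fderiv hw]

theorem Dx_inv (ha : DifferentiableAt ℝ a p) (h0 : a p ≠ 0) :
    Dx (fun q => (a q)⁻¹) p = -(a p)⁻¹ ^ 2 * Dx a p := by
  have h := ((hasDerivAt_slice_x ha).inv (by simpa using h0)).deriv
  simp only [Prod.mk.eta] at h
  rw [Dx, show (fun x => (fun q => (a q)⁻¹) (p.1, x)) = fun x => (a (p.1, x))⁻¹ from rfl,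
    show (fun x => (a (p.1, x))⁻¹) = (fun x => a (p.1, x))⁻¹ from rfl, h,
    Dx_eq_fderiv ha]
  field_simp

theorem Dt_inv (ha : DifferentiableAt ℝ a p) (h0 : a p ≠ 0) :
    Dt (fun q => (a q)⁻¹) p = -(a p)⁻¹ ^ 2 * Dt a p := by
  have h := ((hasDerivAt_slice_t ha).inv (by simpa using h0)).deriv
  simp only [Prod.mk.eta] at h
  rw [Dt, show (fun t => (fun q => (a q)⁻¹) (t, p.2)) = fun t => (a (t, p.2))⁻¹ from rfl,
    show (fun t => (a (t, p.2))⁻¹) = (fun t => a (t, p.2))⁻¹ from rfl, h,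
    Dt_eq_fderiv ha]
  field_simp

theorem Dx_const (c : F) : Dx (fun _ => c) p = 0 := deriv_const _ _

theorem Dx_congr_on {s : Set (ℝ × ℝ)} (hs : IsOpen s) (hp : p ∈ s)
    (h : ∀ q ∈ s, g q = g' q) : Dx g p = Dx g' p := by
  apply Dx_congr_nhds
  filter_upwards [hs.mem_nhds hp] with q hq using h q hq

theorem Dt_congr_on {s : Set (ℝ × ℝ)} (hs : IsOpen s) (hp : p ∈ s)
    (h : ∀ q ∈ s, g q = g' q) : Dt g p = Dt g' p := by
  apply Dt_congr_nhds
  filter_upwards [hs.mem_nhds hp] with q hq using h q hq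

theorem Dt_const (c : F) : Dt (fun _ => c) p = 0 := deriv_const _ _

theorem Dx_tfun (h : ℝ → ℝ) : Dx (fun q => h q.1) p = 0 := by simp [Dx]

theorem Dt_tfun (h : ℝ → ℝ) : Dt (fun q => h q.1) p = deriv h p.1 := rfl

/-- Derivative of the norm of a nonvanishing differentiable field. -/
theorem hasDerivAt_norm {c : ℝ → H} {c' : H} {x : ℝ} (hc : HasDerivAt c c' x)
    (h0 : c x ≠ 0) :
    HasDerivAt (fun y => ‖c y‖) (‖c x‖⁻¹ * ⟪c x, c'⟫) x := by
  have h1 : HasDerivAt (fun y => ‖c y‖ ^ 2) (2 * ⟪c x, c'⟫) x := hc.norm_sq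
  have h2 : (‖c x‖ : ℝ) ^ 2 ≠ 0 := pow_ne_zero _ (norm_ne_zero_iff.mpr h0)
  have h3 := h1.sqrt (by simpa using h2)
  have h4 : (fun y => Real.sqrt (‖c y‖ ^ 2)) = fun y => ‖c y‖ := by
    funext y; rw [Real.sqrt_sq (norm_nonneg _)]
  rw [h4] at h3
  convert h3 using 1
  rw [Real.sqrt_sq (norm_nonneg _)]
  have h5 : ‖c x‖ ≠ 0 := by simpa using h0
  field_simp

theorem Dx_norm (hu : DifferentiableAt ℝ u p) (h0 : u p ≠ 0) :
    Dx (fun q => ‖u q‖) p = ‖u p‖⁻¹ * ⟪u p, Dx u p⟫ := by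
  have h := (hasDerivAt_norm (hasDerivAt_slice_x hu) (by simpa using h0)).deriv
  simp only [Prod.mk.eta] at h
  rw [Dx, show (fun x => (fun q => ‖u q‖) (p.1, x)) = fun x => ‖u (p.1, x)‖ from rfl, h,
    Dx_eq_fderiv hu]

theorem Dt_norm (hu : DifferentiableAt ℝ u p) (h0 : u p ≠ 0) :
    Dt (fun q => ‖u q‖) p = ‖u p‖⁻¹ * ⟪u p, Dt u p⟫ := by
  have h := (hasDerivAt_norm (hasDerivAt_slice_t hu) (by simpa using h0)).deriv
  simp only [Prod.mk.eta] at h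
  rw [Dt, show (fun t => (fun q => ‖u q‖) (t, p.2)) = fun t => ‖u (t, p.2)‖ from rfl, h,
    Dt_eq_fderiv hu]

end Rules

end ElAux


namespace El

open ElAux

abbrev E (n : ℕ) := EuclideanSpace ℝ (Fin n)

variable {n : ℕ}

/-- hypotheses of the main theorem bundled -/
structure Sol (n : ℕ) (T : ℝ) (f : ℝ → ℝ → E n) (φ : ℝ → ℝ → ℝ) (lam : ℝ → ℝ)
    (P : E n) : Prop where
  hT : 0 < T
  hf : ContDiff ℝ (⊤ : ℕ∞) (Function.uncurry f)
  hφ : ContDiff ℝ (⊤ : ℕ∞) (Function.uncurry φ)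
  hlam : ContDiff ℝ (⊤ : ℕ∞) lam
  hreg : ∀ t ∈ Ico (0 : ℝ) T, ∀ x ∈ Icc (0 : ℝ) 1, deriv (f t) x ≠ 0
  hflow : ∀ t ∈ Ico (0 : ℝ) T, ∀ x ∈ Icc (0 : ℝ) 1,
    pT f t x
      = -nablaS (f t) (nablaS (f t) (kappa (f t))) x
        + lam t • kappa (f t) x
        - ((1 / 2 : ℝ) * ‖kappa (f t) x‖ ^ 2) • kappa (f t) x
        + φ t x • tau (f t) x
  hfix : ∀ t ∈ Ico (0 : ℝ) T, f t 1 = P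
  hcurv : ∀ t ∈ Ico (0 : ℝ) T, kappa (f t) 1 = 0

variable {T : ℝ} {f : ℝ → ℝ → E n} {φ : ℝ → ℝ → ℝ} {lam : ℝ → ℝ} {P : E n}

/-- uncurried curve -/
def fh (f : ℝ → ℝ → E n) : ℝ × ℝ → E n := fun p => f p.1 p.2

/-- space derivative of the curve -/
def Fx (f : ℝ → ℝ → E n) : ℝ × ℝ → E n := fun p => deriv (f p.1) p.2

/-- unit tangent, uncurried -/
def tu (f : ℝ → ℝ → E n) : ℝ × ℝ → E n := fun p => tau (f p.1) p.2

/-- arclength derivative of an uncurried field -/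
def sD {F : Type*} [NormedAddCommGroup F] [NormedSpace ℝ F]
    (f : ℝ → ℝ → E n) (g : ℝ × ℝ → F) : ℝ × ℝ → F :=
  fun p => ‖Fx f p‖⁻¹ • Dx g p

/-- iterated normal derivative of curvature, uncurried -/
def B (f : ℝ → ℝ → E n) (m : ℕ) : ℝ × ℝ → E n :=
  fun p => nablaSIter (f p.1) m (kappa (f p.1)) p.2

/-- normal arclength derivative of an uncurried field -/
def nS (f : ℝ → ℝ → E n) (g : ℝ × ℝ → E n) : ℝ × ℝ → E n :=
  fun p => sD f g p - ⟪sD f g p, tu f p⟫ • tu f p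

/-- normal velocity -/
def Vu (f : ℝ → ℝ → E n) (lam : ℝ → ℝ) : ℝ × ℝ → E n :=
  fun p => -B f 2 p + lam p.1 • B f 0 p - ((1 / 2 : ℝ) * ‖B f 0 p‖ ^ 2) • B f 0 p

/-- uncurried tangential speed -/
def ph (φ : ℝ → ℝ → ℝ) : ℝ × ℝ → ℝ := fun p => φ p.1 p.2

/-- the set where the curve is regular -/
def U (f : ℝ → ℝ → E n) : Set (ℝ × ℝ) := {p | deriv (f p.1) p.2 ≠ 0}

/-- the set where the flow equation will be differentiated -/
def W (T : ℝ) (f : ℝ → ℝ → E n) : Set (ℝ × ℝ) :=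
  (Ioo (0 : ℝ) T ×ˢ Ioo (0 : ℝ) 1) ∩ U f

theorem Fx_eq_Dx : Fx f = Dx (fh f) := rfl

theorem tu_eq (p : ℝ × ℝ) : tu f p = ‖Fx f p‖⁻¹ • Fx f p := rfl

theorem tu_eq_sD : tu f = sD f (fh f) := rfl

theorem B_zero_eq : B f 0 = sD f (tu f) := rfl

theorem B_succ_eq (m : ℕ) : B f (m + 1) = nS f (B f m) := rfl

theorem contDiffOn_fh (S : Sol n T f φ lam P) : ContDiffOn ℝ (⊤ : ℕ∞) (fh f) univ :=
  S.hf.contDiffOn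

theorem contDiffOn_Fx (S : Sol n T f φ lam P) : ContDiffOn ℝ (⊤ : ℕ∞) (Fx f) univ := by
  rw [Fx_eq_Dx]; exact contDiffOn_Dx isOpen_univ (contDiffOn_fh S)

theorem isOpen_U (S : Sol n T f φ lam P) : IsOpen (U f) := by
  have h1 : Continuous (Fx f) := by
    have := (contDiffOn_Fx S).continuousOn
    rwa [← continuousOn_univ]
  have : U f = (Fx f) ⁻¹' ({0}ᶜ) := rfl
  rw [this]
  exact (isOpen_compl_singleton).preimage h1

theorem isOpen_W (S : Sol n T f φ lam P) : IsOpen (W T f) :=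
  ((isOpen_Ioo).prod (isOpen_Ioo)).inter (isOpen_U S)

theorem W_subset_U : W T f ⊆ U f := fun _ hp => hp.2

theorem mem_U_of_Icc (S : Sol n T f φ lam P) {t x : ℝ} (ht : t ∈ Ico (0 : ℝ) T)
    (hx : x ∈ Icc (0 : ℝ) 1) : ((t, x) : ℝ × ℝ) ∈ U f := S.hreg t ht x hx

theorem Fx_ne_zero {p : ℝ × ℝ} (hp : p ∈ U f) : Fx f p ≠ 0 := hp

theorem norm_Fx_ne_zero {p : ℝ × ℝ} (hp : p ∈ U f) : ‖Fx f p‖ ≠ 0 :=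
  norm_ne_zero_iff.mpr hp

theorem contDiffOn_vinv (S : Sol n T f φ lam P) :
    ContDiffOn ℝ (⊤ : ℕ∞) (fun p => ‖Fx f p‖⁻¹) (U f) :=
  (((contDiffOn_Fx S).mono (subset_univ _)).norm ℝ fun _ hp => Fx_ne_zero hp).inv
    fun _ hp => norm_Fx_ne_zero hp

theorem contDiffOn_sD {F : Type*} [NormedAddCommGroup F] [NormedSpace ℝ F]
    (S : Sol n T f φ lam P) {g : ℝ × ℝ → F} (hg : ContDiffOn ℝ (⊤ : ℕ∞) g (U f)) :
    ContDiffOn ℝ (⊤ : ℕ∞) (sD f g) (U f) :=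
  (contDiffOn_vinv S).smul (contDiffOn_Dx (isOpen_U S) hg)

theorem contDiffOn_tu (S : Sol n T f φ lam P) : ContDiffOn ℝ (⊤ : ℕ∞) (tu f) (U f) := by
  rw [tu_eq_sD]
  exact contDiffOn_sD S ((contDiffOn_fh S).mono (subset_univ _))

theorem contDiffOn_nS (S : Sol n T f φ lam P) {g : ℝ × ℝ → E n}
    (hg : ContDiffOn ℝ (⊤ : ℕ∞) g (U f)) : ContDiffOn ℝ (⊤ : ℕ∞) (nS f g) (U f) := by
  have h1 := contDiffOn_sD S hg
  exact h1.sub ((ContDiffOn.inner ℝ h1 (contDiffOn_tu S)).smul (contDiffOn_tu S))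

theorem contDiffOn_B (S : Sol n T f φ lam P) (m : ℕ) :
    ContDiffOn ℝ (⊤ : ℕ∞) (B f m) (U f) := by
  induction m with
  | zero => rw [B_zero_eq]; exact contDiffOn_sD S (contDiffOn_tu S)
  | succ m ih => rw [B_succ_eq]; exact contDiffOn_nS S ih

theorem contDiffOn_Vu (S : Sol n T f φ lam P) :
    ContDiffOn ℝ (⊤ : ℕ∞) (Vu f lam) (U f) := by
  have h0 := contDiffOn_B S 0
  have h2 := contDiffOn_B S 2
  have hl : ContDiffOn ℝ (⊤ : ℕ∞) (fun p : ℝ × ℝ => lam p.1) (U f) :=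
    (S.hlam.comp contDiff_fst).contDiffOn
  exact (h2.neg.add (hl.smul h0)).sub
    ((contDiffOn_const.mul ((h0.norm_sq ℝ))).smul h0)

theorem contDiffOn_ph (S : Sol n T f φ lam P) : ContDiffOn ℝ (⊤ : ℕ∞) (ph φ) (U f) :=
  (S.hφ.contDiffOn).mono (subset_univ _)

end El

namespace El
open ElAux

variable {n : ℕ} {T : ℝ} {f : ℝ → ℝ → E n} {φ : ℝ → ℝ → ℝ} {lam : ℝ → ℝ} {P : E n}

theorem diffAt_U (S : Sol n T f φ lam P) {F' : Type*} [NormedAddCommGroup F']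
    [NormedSpace ℝ F'] {g : ℝ × ℝ → F'} (hg : ContDiffOn ℝ (⊤ : ℕ∞) g (U f))
    {p : ℝ × ℝ} (hp : p ∈ U f) : DifferentiableAt ℝ g p :=
  ElAux.diffAt hg (isOpen_U S) hp

theorem norm_tu {p : ℝ × ℝ} (hp : p ∈ U f) : ‖tu f p‖ = 1 := by
  rw [tu_eq, norm_smul, norm_inv, norm_norm, inv_mul_cancel₀ (norm_Fx_ne_zero hp)]

theorem inner_tu_tu {p : ℝ × ℝ} (hp : p ∈ U f) : ⟪tu f p, tu f p⟫ = 1 := by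
  rw [real_inner_self_eq_norm_sq, norm_tu hp, one_pow]

theorem inner_tu_Dx_tu (S : Sol n T f φ lam P) {p : ℝ × ℝ} (hp : p ∈ U f) :
    ⟪tu f p, Dx (tu f) p⟫ = 0 := by
  have h1 : Dx (fun q => ⟪tu f q, tu f q⟫) p = Dx (fun _ : ℝ × ℝ => (1 : ℝ)) p :=
    Dx_congr_on (isOpen_U S) hp fun q hq => inner_tu_tu hq
  rw [Dx_const] at h1
  have h2 := Dx_inner (diffAt_U S (contDiffOn_tu S) hp) (diffAt_U S (contDiffOn_tu S) hp)
  rw [h1] at h2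
  have h3 : ⟪Dx (tu f) p, tu f p⟫ = ⟪tu f p, Dx (tu f) p⟫ := real_inner_comm _ _
  linarith [h2, h3]

theorem inner_B_tu (S : Sol n T f φ lam P) (m : ℕ) {p : ℝ × ℝ} (hp : p ∈ U f) :
    ⟪B f m p, tu f p⟫ = 0 := by
  cases m with
  | zero =>
    have : B f 0 p = ‖Fx f p‖⁻¹ • Dx (tu f) p := rfl
    rw [this, inner_smul_left]
    simp only [RCLike.star_def, conj_trivial]
    rw [real_inner_comm, inner_tu_Dx_tu S hp, mul_zero]
  | succ m =>
    rw [B_succ_eq]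
    show ⟪sD f (B f m) p - ⟪sD f (B f m) p, tu f p⟫ • tu f p, tu f p⟫ = 0
    rw [inner_sub_left, inner_smul_left]
    simp only [RCLike.star_def, conj_trivial]
    rw [inner_tu_tu hp, mul_one, sub_self]

theorem inner_Vu_tu (S : Sol n T f φ lam P) {p : ℝ × ℝ} (hp : p ∈ U f) :
    ⟪Vu f lam p, tu f p⟫ = 0 := by
  rw [Vu]
  simp only [inner_add_left, inner_sub_left, inner_neg_left, inner_smul_left,
    RCLike.star_def, conj_trivial]
  rw [inner_B_tu S 2 hp, inner_B_tu S 0 hp]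
  ring

/-- key identity : for a normal field, `⟪∂ₛ g, τ⟫ = -⟪g, κ⟫`. -/
theorem inner_sD_tu (S : Sol n T f φ lam P) {g : ℝ × ℝ → E n}
    (hg : ContDiffOn ℝ (⊤ : ℕ∞) g (U f)) (hnor : ∀ q ∈ U f, ⟪g q, tu f q⟫ = 0)
    {p : ℝ × ℝ} (hp : p ∈ U f) :
    ⟪sD f g p, tu f p⟫ = -⟪g p, B f 0 p⟫ := by
  have h1 : Dx (fun q => ⟪g q, tu f q⟫) p = Dx (fun _ : ℝ × ℝ => (0 : ℝ)) p :=
    Dx_congr_on (isOpen_U S) hp fun q hq => hnor q hq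
  rw [Dx_const] at h1
  have h2 := Dx_inner (diffAt_U S hg hp) (diffAt_U S (contDiffOn_tu S) hp)
  rw [h1] at h2
  have h3 : ⟪sD f g p, tu f p⟫ = ‖Fx f p‖⁻¹ * ⟪Dx g p, tu f p⟫ := by
    rw [sD]; rw [inner_smul_left]; simp
  have h4 : ⟪g p, B f 0 p⟫ = ‖Fx f p‖⁻¹ * ⟪g p, Dx (tu f) p⟫ := by
    have : B f 0 p = ‖Fx f p‖⁻¹ • Dx (tu f) p := rfl
    rw [this, inner_smul_right]
  have h5 : ⟪Dx g p, tu f p⟫ = -⟪g p, Dx (tu f) p⟫ := by linarith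
  rw [h3, h4, h5]
  ring

/-- for a normal field `∇ₛ g = ∂ₛ g + ⟪g, κ⟫ τ`. -/
theorem nS_eq_of_normal (S : Sol n T f φ lam P) {g : ℝ × ℝ → E n}
    (hg : ContDiffOn ℝ (⊤ : ℕ∞) g (U f)) (hnor : ∀ q ∈ U f, ⟪g q, tu f q⟫ = 0)
    {p : ℝ × ℝ} (hp : p ∈ U f) :
    nS f g p = sD f g p + ⟪g p, B f 0 p⟫ • tu f p := by
  rw [nS, inner_sD_tu S hg hnor hp]
  module

/-- `∂ₛ (∇ₛ^m κ) = ∇ₛ^(m+1) κ - ⟪∇ₛ^m κ, κ⟫ τ`. -/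
theorem sD_B_eq (S : Sol n T f φ lam P) (m : ℕ) {p : ℝ × ℝ} (hp : p ∈ U f) :
    sD f (B f m) p = B f (m + 1) p - ⟪B f m p, B f 0 p⟫ • tu f p := by
  have := nS_eq_of_normal S (contDiffOn_B S m) (fun q hq => inner_B_tu S m hq) hp
  rw [← B_succ_eq] at this
  rw [this]
  module

end El

namespace El
open ElAux

variable {n : ℕ} {T : ℝ} {f : ℝ → ℝ → E n} {φ : ℝ → ℝ → ℝ} {lam : ℝ → ℝ} {P : E n}

/-- pointwise normal projection -/
def Pp (f : ℝ → ℝ → E n) (χ : ℝ × ℝ → E n) : ℝ × ℝ → E n :=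
  fun p => χ p - ⟪χ p, tu f p⟫ • tu f p

theorem nS_eq_Pp_sD (g : ℝ × ℝ → E n) : nS f g = Pp f (sD f g) := rfl

theorem Pp_of_normal {χ : ℝ × ℝ → E n} {p : ℝ × ℝ} (h : ⟪χ p, tu f p⟫ = 0) :
    Pp f χ p = χ p := by
  rw [Pp, h]; module

theorem Pp_add {χ ξ : ℝ × ℝ → E n} (p : ℝ × ℝ) :
    Pp f (fun q => χ q + ξ q) p = Pp f χ p + Pp f ξ p := by
  simp only [Pp, inner_add_left]; module

theorem Pp_sub {χ ξ : ℝ × ℝ → E n} (p : ℝ × ℝ) :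
    Pp f (fun q => χ q - ξ q) p = Pp f χ p - Pp f ξ p := by
  simp only [Pp, inner_sub_left]; module

theorem Pp_smul {a : ℝ × ℝ → ℝ} {χ : ℝ × ℝ → E n} (p : ℝ × ℝ) :
    Pp f (fun q => a q • χ q) p = a p • Pp f χ p := by
  simp only [Pp, inner_smul_left, RCLike.star_def, conj_trivial]; module

theorem Pp_tu_smul {a : ℝ × ℝ → ℝ} {p : ℝ × ℝ} (hp : p ∈ U f) :
    Pp f (fun q => a q • tu f q) p = 0 := by
  simp only [Pp, inner_smul_left, RCLike.star_def, conj_trivial, inner_tu_tu hp]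
  module

theorem inner_nS_tu {g : ℝ × ℝ → E n} {p : ℝ × ℝ} (hp : p ∈ U f) :
    ⟪nS f g p, tu f p⟫ = 0 := by
  rw [nS, inner_sub_left, inner_smul_left]
  simp only [RCLike.star_def, conj_trivial]
  rw [inner_tu_tu hp, mul_one, sub_self]

/-- pointwise linearity of sD -/
theorem sD_add {F' : Type*} [NormedAddCommGroup F'] [NormedSpace ℝ F']
    {g h : ℝ × ℝ → F'} {p : ℝ × ℝ} (hg : DifferentiableAt ℝ g p)
    (hh : DifferentiableAt ℝ h p) :
    sD f (fun q => g q + h q) p = sD f g p + sD f h p := by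
  rw [sD, sD, sD, Dx_add hg hh, smul_add]

theorem sD_sub {F' : Type*} [NormedAddCommGroup F'] [NormedSpace ℝ F']
    {g h : ℝ × ℝ → F'} {p : ℝ × ℝ} (hg : DifferentiableAt ℝ g p)
    (hh : DifferentiableAt ℝ h p) :
    sD f (fun q => g q - h q) p = sD f g p - sD f h p := by
  rw [sD, sD, sD, Dx_sub hg hh, smul_sub]

theorem sD_neg {F' : Type*} [NormedAddCommGroup F'] [NormedSpace ℝ F']
    {g : ℝ × ℝ → F'} {p : ℝ × ℝ} (hg : DifferentiableAt ℝ g p) :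
    sD f (fun q => -g q) p = -sD f g p := by
  rw [sD, sD, Dx_neg hg, smul_neg]

theorem sD_const_smul {F' : Type*} [NormedAddCommGroup F'] [NormedSpace ℝ F']
    {g : ℝ × ℝ → F'} {p : ℝ × ℝ} (r : ℝ) (hg : DifferentiableAt ℝ g p) :
    sD f (fun q => r • g q) p = r • sD f g p := by
  have hr : DifferentiableAt ℝ (fun _ : ℝ × ℝ => r) p := differentiableAt_const _
  have h := Dx_smul hr hg
  rw [sD, sD, h, Dx_const, zero_smul, add_zero, smul_comm]

theorem sD_smul {F' : Type*} [NormedAddCommGroup F'] [NormedSpace ℝ F']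
    {a : ℝ × ℝ → ℝ} {g : ℝ × ℝ → F'} {p : ℝ × ℝ} (ha : DifferentiableAt ℝ a p)
    (hg : DifferentiableAt ℝ g p) :
    sD f (fun q => a q • g q) p = a p • sD f g p + sD f a p • g p := by
  rw [sD, sD, sD, Dx_smul ha hg, smul_add]
  rw [smul_comm, smul_assoc]

theorem sD_mul {a b : ℝ × ℝ → ℝ} {p : ℝ × ℝ} (ha : DifferentiableAt ℝ a p)
    (hb : DifferentiableAt ℝ b p) :
    sD f (fun q => a q * b q) p = sD f a p * b p + a p * sD f b p := by
  rw [sD, sD, sD, Dx_mul ha hb]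
  simp only [smul_eq_mul]
  ring

theorem sD_inner {g h : ℝ × ℝ → E n} {p : ℝ × ℝ} (hg : DifferentiableAt ℝ g p)
    (hh : DifferentiableAt ℝ h p) :
    sD f (fun q => ⟪g q, h q⟫) p = ⟪sD f g p, h p⟫ + ⟪g p, sD f h p⟫ := by
  rw [sD, Dx_inner hg hh]
  simp only [smul_eq_mul, sD, inner_smul_left, inner_smul_right, RCLike.star_def,
    conj_trivial]
  ring

theorem sD_tfun {h : ℝ → ℝ} {p : ℝ × ℝ} : sD f (fun q => h q.1) p = 0 := by
  rw [sD, Dx_tfun, smul_zero]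

/-- inner product of `∂ₛ` of two normal fields -/
theorem sD_inner_BB (S : Sol n T f φ lam P) (c d : ℕ) {p : ℝ × ℝ} (hp : p ∈ U f) :
    sD f (fun q => ⟪B f c q, B f d q⟫) p
      = ⟪B f (c + 1) p, B f d p⟫ + ⟪B f c p, B f (d + 1) p⟫ := by
  rw [sD_inner (diffAt_U S (contDiffOn_B S c) hp) (diffAt_U S (contDiffOn_B S d) hp),
    sD_B_eq S c hp, sD_B_eq S d hp]
  rw [inner_sub_left, inner_sub_right, inner_smul_left, inner_smul_right]
  simp only [RCLike.star_def, conj_trivial]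
  have e1 : ⟪tu f p, B f d p⟫ = 0 := by rw [real_inner_comm]; exact inner_B_tu S d hp
  have e2 : ⟪B f c p, tu f p⟫ = 0 := inner_B_tu S c hp
  rw [e1, e2]
  ring

/-- `∇ₛ(a ψ) = a ∇ₛψ + (∂ₛ a) ψ` for normal `ψ`. -/
theorem nS_smul_of_normal (S : Sol n T f φ lam P) {a : ℝ × ℝ → ℝ} {g : ℝ × ℝ → E n}
    {p : ℝ × ℝ} (hp : p ∈ U f) (ha : DifferentiableAt ℝ a p) (hg : DifferentiableAt ℝ g p)
    (hnor : ⟪g p, tu f p⟫ = 0) :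
    nS f (fun q => a q • g q) p = a p • nS f g p + sD f a p • g p := by
  rw [nS, nS, sD_smul ha hg]
  rw [inner_add_left, inner_smul_left, inner_smul_left]
  simp only [RCLike.star_def, conj_trivial]
  rw [hnor, mul_zero, add_zero]
  module

theorem nS_add {g h : ℝ × ℝ → E n} {p : ℝ × ℝ} (hg : DifferentiableAt ℝ g p)
    (hh : DifferentiableAt ℝ h p) :
    nS f (fun q => g q + h q) p = nS f g p + nS f h p := by
  rw [nS, nS, nS, sD_add hg hh, inner_add_left]
  module

theorem nS_sub {g h : ℝ × ℝ → E n} {p : ℝ × ℝ} (hg : DifferentiableAt ℝ g p)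
    (hh : DifferentiableAt ℝ h p) :
    nS f (fun q => g q - h q) p = nS f g p - nS f h p := by
  rw [nS, nS, nS, sD_sub hg hh, inner_sub_left]
  module

theorem nS_neg {g : ℝ × ℝ → E n} {p : ℝ × ℝ} (hg : DifferentiableAt ℝ g p) :
    nS f (fun q => -g q) p = -nS f g p := by
  rw [nS, nS, sD_neg hg, inner_neg_left]
  module

theorem nS_const_smul {g : ℝ × ℝ → E n} {p : ℝ × ℝ} (r : ℝ) (hg : DifferentiableAt ℝ g p) :
    nS f (fun q => r • g q) p = r • nS f g p := by
  rw [nS, nS, sD_const_smul r hg, inner_smul_left]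
  simp only [RCLike.star_def, conj_trivial]
  module

theorem nS_zero {p : ℝ × ℝ} : nS f (fun _ => 0) p = 0 := by
  have : sD f (fun _ : ℝ × ℝ => (0 : E n)) p = 0 := by
    rw [sD, Dx_const, smul_zero]
  rw [nS, this]
  simp

end El

namespace El
open ElAux

variable {n : ℕ} {T : ℝ} {f : ℝ → ℝ → E n} {φ : ℝ → ℝ → ℝ} {lam : ℝ → ℝ} {P : E n}

theorem contDiffOn_v (S : Sol n T f φ lam P) :
    ContDiffOn ℝ (⊤ : ℕ∞) (fun p => ‖Fx f p‖) (U f) :=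
  ((contDiffOn_Fx S).mono (subset_univ _)).norm ℝ fun _ hp => Fx_ne_zero hp

theorem Fx_eq_v_tu {p : ℝ × ℝ} (hp : p ∈ U f) : Fx f p = ‖Fx f p‖ • tu f p := by
  rw [tu_eq, smul_smul, mul_inv_cancel₀ (norm_Fx_ne_zero hp), one_smul]

theorem Dx_eq_v_sD {F' : Type*} [NormedAddCommGroup F'] [NormedSpace ℝ F']
    (g : ℝ × ℝ → F') {p : ℝ × ℝ} (hp : p ∈ U f) :
    Dx g p = ‖Fx f p‖ • sD f g p := by
  rw [sD, smul_smul, mul_inv_cancel₀ (norm_Fx_ne_zero hp), one_smul]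

theorem flowW (S : Sol n T f φ lam P) {p : ℝ × ℝ} (hp : p ∈ W T f) :
    Dt (fh f) p = Vu f lam p + ph φ p • tu f p := by
  obtain ⟨⟨ht, hx⟩, _⟩ := hp
  have h := S.hflow p.1 ⟨le_of_lt ht.1, ht.2⟩ p.2 ⟨le_of_lt hx.1, le_of_lt hx.2⟩
  exact h

theorem Dt_Fx_eq (S : Sol n T f φ lam P) {p : ℝ × ℝ} (hp : p ∈ W T f) :
    Dt (Fx f) p = Dx (Vu f lam) p + (ph φ p • Dx (tu f) p + Dx (ph φ) p • tu f p) := by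
  have h1 : Dt (Fx f) p = Dx (Dt (fh f)) p := by
    rw [Fx_eq_Dx]
    exact Dt_Dx_comm isOpen_univ ((contDiffOn_fh S)) (mem_univ p)
  have h2 : Dx (Dt (fh f)) p = Dx (fun q => Vu f lam q + ph φ q • tu f q) p :=
    Dx_congr_on (isOpen_W S) hp fun q hq => flowW S hq
  have hpU : p ∈ U f := hp.2
  have hV : DifferentiableAt ℝ (Vu f lam) p := diffAt_U S (contDiffOn_Vu S) hpU
  have hph : DifferentiableAt ℝ (ph φ) p := diffAt_U S (contDiffOn_ph S) hpU
  have htu : DifferentiableAt ℝ (tu f) p := diffAt_U S (contDiffOn_tu S) hpU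
  rw [h1, h2, Dx_add (g' := fun q => ph φ q • tu f q) hV (hph.smul htu), Dx_smul hph htu]

/-- evolution of the length element -/
theorem Dt_v (S : Sol n T f φ lam P) {p : ℝ × ℝ} (hp : p ∈ W T f) :
    Dt (fun q => ‖Fx f q‖) p
      = ‖Fx f p‖ * (sD f (ph φ) p - ⟪Vu f lam p, B f 0 p⟫) := by
  have hpU : p ∈ U f := hp.2
  have hFx : DifferentiableAt ℝ (Fx f) p :=
    ElAux.diffAt ((contDiffOn_Fx S).mono (subset_univ _)) (isOpen_U S) hpU
  rw [Dt_norm hFx (Fx_ne_zero hpU), Dt_Fx_eq S hp]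
  have hv := norm_Fx_ne_zero hpU
  have key : ⟪Fx f p, Dx (Vu f lam) p + (ph φ p • Dx (tu f) p + Dx (ph φ) p • tu f p)⟫
      = ‖Fx f p‖ ^ 2 * (sD f (ph φ) p - ⟪Vu f lam p, B f 0 p⟫) := by
    have e1 : ⟪tu f p, sD f (Vu f lam) p⟫ = -⟪Vu f lam p, B f 0 p⟫ := by
      rw [real_inner_comm]
      exact inner_sD_tu S (contDiffOn_Vu S) (fun q hq => inner_Vu_tu S hq) hpU
    have e2 : ⟪tu f p, Dx (tu f) p⟫ = 0 := inner_tu_Dx_tu S hpU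
    have e3 : ⟪tu f p, tu f p⟫ = 1 := inner_tu_tu hpU
    conv_lhs => rw [show Fx f p = ‖Fx f p‖ • tu f p from Fx_eq_v_tu hpU]
    rw [inner_smul_left]
    simp only [RCLike.star_def, conj_trivial]
    rw [inner_add_right, inner_add_right, inner_smul_right, inner_smul_right]
    rw [Dx_eq_v_sD (Vu f lam) hpU, Dx_eq_v_sD (ph φ) hpU, inner_smul_right]
    rw [e1, e2, e3]
    simp only [smul_eq_mul]
    ring
  rw [key]
  field_simp

theorem Dt_vinv (S : Sol n T f φ lam P) {p : ℝ × ℝ} (hp : p ∈ W T f) :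
    Dt (fun q => ‖Fx f q‖⁻¹) p
      = -‖Fx f p‖⁻¹ * (sD f (ph φ) p - ⟪Vu f lam p, B f 0 p⟫) := by
  have hpU : p ∈ U f := hp.2
  have hv : DifferentiableAt ℝ (fun q => ‖Fx f q‖) p :=
    diffAt_U S (contDiffOn_v S) hpU
  rw [Dt_inv hv (norm_Fx_ne_zero hpU), Dt_v S hp]
  have hne := norm_Fx_ne_zero hpU
  field_simp

/-- commutator of `∂ₜ` and `∂ₛ` -/
theorem Dt_sD_comm {F' : Type*} [NormedAddCommGroup F'] [NormedSpace ℝ F']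
    (S : Sol n T f φ lam P) {g : ℝ × ℝ → F'} (hg : ContDiffOn ℝ (⊤ : ℕ∞) g (U f))
    {p : ℝ × ℝ} (hp : p ∈ W T f) :
    Dt (sD f g) p = sD f (Dt g) p
      + (⟪Vu f lam p, B f 0 p⟫ - sD f (ph φ) p) • sD f g p := by
  have hpU : p ∈ U f := hp.2
  have hvinv : DifferentiableAt ℝ (fun q => ‖Fx f q‖⁻¹) p :=
    diffAt_U S (contDiffOn_vinv S) hpU
  have hDxg : DifferentiableAt ℝ (Dx g) p :=
    diffAt_U S (contDiffOn_Dx (isOpen_U S) hg) hpU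
  have h1 : Dt (sD f g) p
      = ‖Fx f p‖⁻¹ • Dt (Dx g) p + Dt (fun q => ‖Fx f q‖⁻¹) p • Dx g p :=
    Dt_smul hvinv hDxg
  rw [h1, Dt_Dx_comm (isOpen_U S) hg hpU, Dt_vinv S hp, Dx_eq_v_sD g hpU]
  have hne := norm_Fx_ne_zero hpU
  have : sD f (Dt g) p = ‖Fx f p‖⁻¹ • Dx (Dt g) p := rfl
  rw [this, smul_smul]
  have hsc : (-‖Fx f p‖⁻¹ * (sD f (ph φ) p - ⟪Vu f lam p, B f 0 p⟫) * ‖Fx f p‖)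
      = ⟪Vu f lam p, B f 0 p⟫ - sD f (ph φ) p := by
    field_simp
    ring
  rw [hsc]

/-- evolution of the unit tangent -/
theorem Dt_tu (S : Sol n T f φ lam P) {p : ℝ × ℝ} (hp : p ∈ W T f) :
    Dt (tu f) p = nS f (Vu f lam) p + ph φ p • B f 0 p := by
  have hpU : p ∈ U f := hp.2
  have hfh : ContDiffOn ℝ (⊤ : ℕ∞) (fh f) (U f) := (contDiffOn_fh S).mono (subset_univ _)
  have h1 : Dt (tu f) p = sD f (Dt (fh f)) p
      + (⟪Vu f lam p, B f 0 p⟫ - sD f (ph φ) p) • tu f p := by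
    rw [tu_eq_sD]
    exact Dt_sD_comm S hfh hp
  have h2 : Dx (Dt (fh f)) p = Dx (fun q => Vu f lam q + ph φ q • tu f q) p :=
    Dx_congr_on (isOpen_W S) hp fun q hq => flowW S hq
  have hV : DifferentiableAt ℝ (Vu f lam) p := diffAt_U S (contDiffOn_Vu S) hpU
  have hph : DifferentiableAt ℝ (ph φ) p := diffAt_U S (contDiffOn_ph S) hpU
  have htu : DifferentiableAt ℝ (tu f) p := diffAt_U S (contDiffOn_tu S) hpU
  have h3 : sD f (Dt (fh f)) p = sD f (Vu f lam) p + (ph φ p • B f 0 p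
      + sD f (ph φ) p • tu f p) := by
    calc sD f (Dt (fh f)) p = ‖Fx f p‖⁻¹ • Dx (Dt (fh f)) p := rfl
      _ = ‖Fx f p‖⁻¹ • (Dx (Vu f lam) p
          + (ph φ p • Dx (tu f) p + Dx (ph φ) p • tu f p)) := by
          rw [h2, Dx_add (g' := fun q => ph φ q • tu f q) hV (hph.smul htu), Dx_smul hph htu]
      _ = ‖Fx f p‖⁻¹ • Dx (Vu f lam) p + (ph φ p • (‖Fx f p‖⁻¹ • Dx (tu f) p)
          + (‖Fx f p‖⁻¹ * Dx (ph φ) p) • tu f p) := by module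
      _ = sD f (Vu f lam) p + (ph φ p • B f 0 p + sD f (ph φ) p • tu f p) := rfl
  have h4 : nS f (Vu f lam) p = sD f (Vu f lam) p + ⟪Vu f lam p, B f 0 p⟫ • tu f p :=
    nS_eq_of_normal S (contDiffOn_Vu S) (fun q hq => inner_Vu_tu S hq) hpU
  rw [h1, h3, h4]
  module

end El

namespace El
open ElAux

/-- scalar monomials of given weight built from curvature derivatives and `λ` -/
inductive Sc {n : ℕ} (f : ℝ → ℝ → E n) (lam : ℝ → ℝ) : ℕ → (ℝ × ℝ → ℝ) → Prop
  | pair (c d : ℕ) : Sc f lam (c + d + 2) fun p => ⟪B f c p, B f d p⟫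
  | lamc : Sc f lam 2 fun p => lam p.1
  | mul {w₁ w₂ : ℕ} {g h : ℝ × ℝ → ℝ} : Sc f lam w₁ g → Sc f lam w₂ h →
      Sc f lam (w₁ + w₂) fun p => g p * h p

/-- sums of scalar monomials -/
inductive ScS {n : ℕ} (f : ℝ → ℝ → E n) (lam : ℝ → ℝ) : ℕ → (ℝ × ℝ → ℝ) → Prop
  | zero (w : ℕ) : ScS f lam w fun _ => 0
  | of {w : ℕ} {g : ℝ × ℝ → ℝ} : Sc f lam w g → ScS f lam w g
  | smul (r : ℝ) {w : ℕ} {g : ℝ × ℝ → ℝ} : ScS f lam w g → ScS f lam w fun p => r * g p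
  | add {w : ℕ} {g h : ℝ × ℝ → ℝ} : ScS f lam w g → ScS f lam w h →
      ScS f lam w fun p => g p + h p

/-- sums of vector monomials (a scalar monomial times a curvature derivative) -/
inductive VS {n : ℕ} (f : ℝ → ℝ → E n) (lam : ℝ → ℝ) : ℕ → (ℝ × ℝ → E n) → Prop
  | zero (w : ℕ) : VS f lam w fun _ => 0
  | mon {w₁ : ℕ} {g : ℝ × ℝ → ℝ} (e : ℕ) : Sc f lam w₁ g →
      VS f lam (w₁ + e + 1) fun p => g p • B f e p
  | smul (r : ℝ) {w : ℕ} {ψ : ℝ × ℝ → E n} : VS f lam w ψ → VS f lam w fun p => r • ψ p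
  | add {w : ℕ} {ψ χ : ℝ × ℝ → E n} : VS f lam w ψ → VS f lam w χ →
      VS f lam w fun p => ψ p + χ p

variable {n : ℕ} {T : ℝ} {f : ℝ → ℝ → E n} {φ : ℝ → ℝ → ℝ} {lam : ℝ → ℝ} {P : E n}

theorem ScS.wcongr {w w' : ℕ} {g : ℝ × ℝ → ℝ} (h : ScS f lam w g) (e : w = w') :
    ScS f lam w' g := e ▸ h

theorem ScS.fcongr {w : ℕ} {g g' : ℝ × ℝ → ℝ} (h : ScS f lam w g) (e : ∀ p, g p = g' p) :
    ScS f lam w g' := (funext e : g = g') ▸ h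

theorem VS.wcongr {w w' : ℕ} {ψ : ℝ × ℝ → E n} (h : VS f lam w ψ) (e : w = w') :
    VS f lam w' ψ := e ▸ h

theorem VS.fcongr {w : ℕ} {ψ ψ' : ℝ × ℝ → E n} (h : VS f lam w ψ) (e : ∀ p, ψ p = ψ' p) :
    VS f lam w ψ' := (funext e : ψ = ψ') ▸ h

theorem Sc.two_le {w : ℕ} {g : ℝ × ℝ → ℝ} (h : Sc f lam w g) : 2 ≤ w := by
  induction h with
  | pair c d => omega
  | lamc => omega
  | mul h1 h2 ih1 ih2 => omega

theorem Sc.smooth (S : Sol n T f φ lam P) {w : ℕ} {g : ℝ × ℝ → ℝ} (h : Sc f lam w g) :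
    ContDiffOn ℝ (⊤ : ℕ∞) g (U f) := by
  induction h with
  | pair c d => exact ContDiffOn.inner ℝ (contDiffOn_B S c) (contDiffOn_B S d)
  | lamc => exact (S.hlam.comp contDiff_fst).contDiffOn
  | mul h1 h2 ih1 ih2 => exact ih1.mul ih2

theorem ScS.smooth (S : Sol n T f φ lam P) {w : ℕ} {g : ℝ × ℝ → ℝ} (h : ScS f lam w g) :
    ContDiffOn ℝ (⊤ : ℕ∞) g (U f) := by
  induction h with
  | zero w => exact contDiffOn_const
  | of h => exact h.smooth S
  | smul r h ih => exact contDiffOn_const.mul ih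
  | add h1 h2 ih1 ih2 => exact ih1.add ih2

theorem VS.smooth (S : Sol n T f φ lam P) {w : ℕ} {ψ : ℝ × ℝ → E n} (h : VS f lam w ψ) :
    ContDiffOn ℝ (⊤ : ℕ∞) ψ (U f) := by
  induction h with
  | zero w => exact contDiffOn_const
  | mon e hg => exact (hg.smooth S).smul (contDiffOn_B S e)
  | smul r h ih => exact (contDiffOn_const (c := r)).smul ih
  | add h1 h2 ih1 ih2 => exact ih1.add ih2

theorem VS.normal {w : ℕ} {ψ : ℝ × ℝ → E n} (h : VS f lam w ψ) (S : Sol n T f φ lam P)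
    {p : ℝ × ℝ} (hp : p ∈ U f) : ⟪ψ p, tu f p⟫ = 0 := by
  induction h with
  | zero w => simp
  | mon e hg =>
    rw [inner_smul_left]
    simp only [RCLike.star_def, conj_trivial]
    rw [inner_B_tu S e hp, mul_zero]
  | smul r h ih =>
    rw [inner_smul_left]
    simp only [RCLike.star_def, conj_trivial]
    rw [ih, mul_zero]
  | add h1 h2 ih1 ih2 => rw [inner_add_left, ih1, ih2, add_zero]

theorem ScS.mulSc {w₁ w₂ : ℕ} {g h : ℝ × ℝ → ℝ} (hg : ScS f lam w₁ g)
    (hh : Sc f lam w₂ h) : ScS f lam (w₁ + w₂) fun p => g p * h p := by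
  induction hg with
  | zero w => exact (ScS.zero _).fcongr fun p => (zero_mul _).symm
  | of h1 => exact ScS.of (h1.mul hh)
  | smul r h1 ih => exact (ih.smul r).fcongr fun p => by ring
  | add h1 h2 ih1 ih2 => exact (ih1.add ih2).fcongr fun p => by ring

theorem Sc.mulScS {w₁ w₂ : ℕ} {g h : ℝ × ℝ → ℝ} (hg : Sc f lam w₁ g)
    (hh : ScS f lam w₂ h) : ScS f lam (w₁ + w₂) fun p => g p * h p :=
  ((hh.mulSc hg).fcongr fun p => by ring).wcongr (by omega)

theorem VS.smulSc {w₁ w₂ : ℕ} {a : ℝ × ℝ → ℝ} {ψ : ℝ × ℝ → E n} (ha : Sc f lam w₁ a)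
    (hψ : VS f lam w₂ ψ) : VS f lam (w₁ + w₂) fun p => a p • ψ p := by
  induction hψ with
  | zero w => exact (VS.zero _).fcongr fun p => (smul_zero _).symm
  | mon e hg =>
    exact ((VS.mon e (ha.mul hg)).fcongr fun p => (smul_smul _ _ _).symm).wcongr (by omega)
  | smul r h ih => exact (ih.smul r).fcongr fun p => (smul_comm _ _ _)
  | add h1 h2 ih1 ih2 => exact (ih1.add ih2).fcongr fun p => (smul_add _ _ _).symm

theorem VS.smulScS {w₁ w₂ : ℕ} {a : ℝ × ℝ → ℝ} {ψ : ℝ × ℝ → E n} (ha : ScS f lam w₁ a)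
    (hψ : VS f lam w₂ ψ) : VS f lam (w₁ + w₂) fun p => a p • ψ p := by
  induction ha with
  | zero w => exact (VS.zero _).fcongr fun p => (zero_smul ℝ _).symm
  | of h1 => exact VS.smulSc h1 hψ
  | smul r h1 ih => exact (ih.smul r).fcongr fun p => (mul_smul _ _ _).symm
  | add h1 h2 ih1 ih2 => exact (ih1.add ih2).fcongr fun p => (add_smul _ _ _).symm

theorem ScS.innerB (m : ℕ) {w : ℕ} {ψ : ℝ × ℝ → E n} (hψ : VS f lam w ψ) :
    ScS f lam (w + m + 1) fun p => ⟪B f m p, ψ p⟫ := by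
  induction hψ with
  | zero w => exact (ScS.zero _).fcongr fun p => (inner_zero_right _).symm
  | mon e hg =>
    refine (((Sc.pair m e).mulScS (ScS.of hg)).fcongr fun p => ?_).wcongr (by omega)
    rw [inner_smul_right]
    ring
  | smul r h ih => exact (ih.smul r).fcongr fun p => (real_inner_smul_right _ _ _).symm
  | add h1 h2 ih1 ih2 => exact (ih1.add ih2).fcongr fun p => (inner_add_right _ _ _).symm

theorem VS.smulB {w : ℕ} {g : ℝ × ℝ → ℝ} (hg : ScS f lam w g) (e : ℕ) :
    VS f lam (w + e + 1) fun p => g p • B f e p := by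
  induction hg with
  | zero w => exact (VS.zero _).fcongr fun p => (zero_smul ℝ _).symm
  | of h1 => exact VS.mon e h1
  | smul r h1 ih => exact (ih.smul r).fcongr fun p => (mul_smul _ _ _).symm
  | add h1 h2 ih1 ih2 => exact (ih1.add ih2).fcongr fun p => (add_smul _ _ _).symm

end El

namespace El
open ElAux

variable {n : ℕ} {T : ℝ} {f : ℝ → ℝ → E n} {φ : ℝ → ℝ → ℝ} {lam : ℝ → ℝ} {P : E n}

/-- arclength derivative of a scalar monomial is a sum of monomials -/
theorem Sc.sD_rep (S : Sol n T f φ lam P) {w : ℕ} {g : ℝ × ℝ → ℝ} (hg : Sc f lam w g) :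
    ∃ g', ScS f lam (w + 1) g' ∧ ∀ p ∈ U f, sD f g p = g' p := by
  induction hg with
  | pair c d =>
    refine ⟨fun p => ⟪B f (c + 1) p, B f d p⟫ + ⟪B f c p, B f (d + 1) p⟫, ?_, ?_⟩
    · exact (((ScS.of (Sc.pair (c + 1) d)).wcongr (by omega)).add
        ((ScS.of (Sc.pair c (d + 1))).wcongr (by omega)))
    · exact fun p hp => sD_inner_BB S c d hp
  | lamc =>
    exact ⟨fun _ => 0, ScS.zero _, fun p hp => sD_tfun⟩
  | @mul w₁ w₂ g h h1 h2 ih1 ih2 =>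
    obtain ⟨g1, hg1, he1⟩ := ih1
    obtain ⟨g2, hg2, he2⟩ := ih2
    refine ⟨fun p => g1 p * h p + g p * g2 p, ?_, ?_⟩
    · exact ((hg1.mulSc h2).wcongr (by omega)).add ((h1.mulScS hg2).wcongr (by omega))
    · intro p hp
      rw [sD_mul (diffAt_U S (h1.smooth S) hp) (diffAt_U S (h2.smooth S) hp),
        he1 p hp, he2 p hp]

theorem ScS.sD_rep (S : Sol n T f φ lam P) {w : ℕ} {g : ℝ × ℝ → ℝ} (hg : ScS f lam w g) :
    ∃ g', ScS f lam (w + 1) g' ∧ ∀ p ∈ U f, sD f g p = g' p := by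
  induction hg with
  | zero w =>
    refine ⟨fun _ => 0, ScS.zero _, fun p hp => ?_⟩
    rw [sD, Dx_const, smul_zero]
  | of h => exact h.sD_rep S
  | @smul r w g h ih =>
    obtain ⟨g1, hg1, he1⟩ := ih
    refine ⟨fun p => r * g1 p, hg1.smul r, fun p hp => ?_⟩
    have : sD f (fun q => r * g q) p = r • sD f g p := by
      have := sD_const_smul (f := f) (g := g) (p := p) r (diffAt_U S (h.smooth S) hp)
      simpa using this
    rw [this, he1 p hp]
    simp
  | @add w g h h1 h2 ih1 ih2 =>
    obtain ⟨g1, hg1, he1⟩ := ih1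
    obtain ⟨g2, hg2, he2⟩ := ih2
    refine ⟨fun p => g1 p + g2 p, hg1.add hg2, fun p hp => ?_⟩
    rw [sD_add (diffAt_U S (h1.smooth S) hp) (diffAt_U S (h2.smooth S) hp),
      he1 p hp, he2 p hp]

/-- normal arclength derivative of a vector monomial sum -/
theorem VS.nS_rep (S : Sol n T f φ lam P) {w : ℕ} {ψ : ℝ × ℝ → E n} (hψ : VS f lam w ψ) :
    ∃ ψ', VS f lam (w + 1) ψ' ∧ ∀ p ∈ U f, nS f ψ p = ψ' p := by
  induction hψ with
  | zero w => exact ⟨fun _ => 0, VS.zero _, fun p hp => nS_zero⟩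
  | @mon w₁ g e hg =>
    obtain ⟨g1, hg1, he1⟩ := hg.sD_rep S
    refine ⟨fun p => g p • B f (e + 1) p + g1 p • B f e p, ?_, ?_⟩
    · exact ((VS.mon (e + 1) hg).wcongr (by omega)).add ((VS.smulB hg1 e).wcongr (by omega))
    · intro p hp
      rw [nS_smul_of_normal S hp (diffAt_U S (hg.smooth S) hp)
        (diffAt_U S (contDiffOn_B S e) hp) (inner_B_tu S e hp)]
      rw [← B_succ_eq, he1 p hp]
  | @smul r w ψ h ih =>
    obtain ⟨ψ1, hψ1, he1⟩ := ih
    refine ⟨fun p => r • ψ1 p, hψ1.smul r, fun p hp => ?_⟩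
    rw [nS_const_smul r (diffAt_U S (h.smooth S) hp), he1 p hp]
  | @add w ψ χ h1 h2 ih1 ih2 =>
    obtain ⟨ψ1, hψ1, he1⟩ := ih1
    obtain ⟨ψ2, hψ2, he2⟩ := ih2
    refine ⟨fun p => ψ1 p + ψ2 p, hψ1.add hψ2, fun p hp => ?_⟩
    rw [nS_add (diffAt_U S (h1.smooth S) hp) (diffAt_U S (h2.smooth S) hp),
      he1 p hp, he2 p hp]

/-- boundary evaluation: odd-weight scalar monomials vanish -/
theorem Sc.eval {l : ℕ} {t : ℝ} (hIH : ∀ j : ℕ, 2 * j ≤ 2 * l + 2 → B f (2 * j) (t, 1) = 0)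
    {w : ℕ} {g : ℝ × ℝ → ℝ} (hg : Sc f lam w g) (hodd : Odd w) (hle : w ≤ 2 * l + 5) :
    g (t, 1) = 0 := by
  induction hg with
  | pair c d =>
    rcases Nat.even_or_odd c with hc | hc
    · obtain ⟨j, hj⟩ := hc
      have hcle : c ≤ 2 * l + 2 := by
        obtain ⟨k, hk⟩ := hodd
        omega
      have : B f c (t, 1) = 0 := by
        have := hIH j (by omega)
        rw [show c = 2 * j by omega]
        exact this
      simp only [this, inner_zero_left]
    · have hd : Even d := by
        obtain ⟨k, hk⟩ := hodd
        obtain ⟨k2, hk2⟩ := hc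
        exact ⟨(d + 1) / 2 * 1, by omega⟩
      obtain ⟨j, hj⟩ := hd
      have : B f d (t, 1) = 0 := by
        have := hIH j (by obtain ⟨k, hk⟩ := hodd; omega)
        rw [show d = 2 * j by omega]
        exact this
      simp only [this, inner_zero_right]
  | lamc =>
    exfalso
    obtain ⟨k, hk⟩ := hodd
    omega
  | @mul w₁ w₂ g h h1 h2 ih1 ih2 =>
    rcases Nat.even_or_odd w₁ with hw1 | hw1
    · have hw2 : Odd w₂ := by
        obtain ⟨k, hk⟩ := hodd; obtain ⟨k2, hk2⟩ := hw1
        exact ⟨w₂ / 2 * 1, by omega⟩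
      show g (t, 1) * h (t, 1) = 0
      rw [ih2 hw2 (by omega), mul_zero]
    · show g (t, 1) * h (t, 1) = 0
      rw [ih1 hw1 (by omega), zero_mul]

theorem ScS.eval {l : ℕ} {t : ℝ} (hIH : ∀ j : ℕ, 2 * j ≤ 2 * l + 2 → B f (2 * j) (t, 1) = 0)
    {w : ℕ} {g : ℝ × ℝ → ℝ} (hg : ScS f lam w g) (hodd : Odd w) (hle : w ≤ 2 * l + 5) :
    g (t, 1) = 0 := by
  induction hg with
  | zero w => rfl
  | of h => exact h.eval hIH hodd hle
  | @smul r w g h ih =>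
    show r * g (t, 1) = 0
    rw [ih hodd hle, mul_zero]
  | @add w g h h1 h2 ih1 ih2 =>
    show g (t, 1) + h (t, 1) = 0
    rw [ih1 hodd hle, ih2 hodd hle, add_zero]

theorem VS.eval {l : ℕ} {t : ℝ} (hIH : ∀ j : ℕ, 2 * j ≤ 2 * l + 2 → B f (2 * j) (t, 1) = 0)
    {w : ℕ} {ψ : ℝ × ℝ → E n} (hψ : VS f lam w ψ) (hodd : Odd w) (hle : w ≤ 2 * l + 5) :
    ψ (t, 1) = 0 := by
  induction hψ with
  | zero w => rfl
  | @mon w₁ g e hg =>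
    have h2 := hg.two_le
    rcases Nat.even_or_odd e with he | he
    · obtain ⟨j, hj⟩ := he
      have : B f e (t, 1) = 0 := by
        have := hIH j (by obtain ⟨k, hk⟩ := hodd; omega)
        rw [show e = 2 * j by omega]
        exact this
      show g (t, 1) • B f e (t, 1) = 0
      rw [this, smul_zero]
    · have hw1 : Odd w₁ := by
        obtain ⟨k, hk⟩ := hodd; obtain ⟨k2, hk2⟩ := he
        exact ⟨w₁ / 2 * 1, by omega⟩
      show g (t, 1) • B f e (t, 1) = 0
      rw [hg.eval hIH hw1 (by omega), zero_smul]
  | @smul r w ψ h ih =>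
    show r • ψ (t, 1) = 0
    rw [ih hodd hle, smul_zero]
  | @add w ψ χ h1 h2 ih1 ih2 =>
    show ψ (t, 1) + χ (t, 1) = 0
    rw [ih1 hodd hle, ih2 hodd hle, add_zero]

end El

namespace El
open ElAux

variable {n : ℕ} {T : ℝ} {f : ℝ → ℝ → E n} {φ : ℝ → ℝ → ℝ} {lam : ℝ → ℝ} {P : E n}

theorem contDiffOn_Pp (S : Sol n T f φ lam P) {g : ℝ × ℝ → E n}
    (hg : ContDiffOn ℝ (⊤ : ℕ∞) g (U f)) : ContDiffOn ℝ (⊤ : ℕ∞) (Pp f g) (U f) :=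
  hg.sub ((ContDiffOn.inner ℝ hg (contDiffOn_tu S)).smul (contDiffOn_tu S))

/-- decomposition of the velocity into leading term and monomials -/
theorem Vu_rep : ∃ R, VS f lam 3 R ∧ ∀ p, Vu f lam p = -B f 2 p + R p := by
  refine ⟨fun p => lam p.1 • B f 0 p
    + (-(1 / 2 : ℝ) * ⟪B f 0 p, B f 0 p⟫) • B f 0 p, ?_, ?_⟩
  · refine VS.add ?_ ?_
    · exact (VS.mon 0 Sc.lamc).wcongr (by omega)
    · exact (VS.smulB (ScS.smul (-(1 / 2 : ℝ)) (ScS.of (Sc.pair 0 0))) 0).wcongr (by omega)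
  · intro p
    rw [Vu]
    rw [show ‖B f 0 p‖ ^ 2 = ⟪B f 0 p, B f 0 p⟫ from (real_inner_self_eq_norm_sq _).symm]
    module

theorem VuB0_rep : ∃ g, ScS f lam 4 g ∧ ∀ p, ⟪Vu f lam p, B f 0 p⟫ = g p := by
  obtain ⟨R, hR, he⟩ := Vu_rep (f := f) (lam := lam)
  refine ⟨fun p => (-1 : ℝ) * ⟪B f 0 p, B f 2 p⟫ + ⟪B f 0 p, R p⟫, ?_, ?_⟩
  · exact (ScS.smul (-1) (ScS.of (Sc.pair 0 2))).add ((ScS.innerB 0 hR).wcongr (by omega))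
  · intro p
    rw [real_inner_comm, he p, inner_add_right, inner_neg_right]
    ring

/-- decomposition of `∇ₛ V` -/
theorem nSVu_rep (S : Sol n T f φ lam P) :
    ∃ R, VS f lam 4 R ∧ ∀ p ∈ U f, nS f (Vu f lam) p = -B f 3 p + R p := by
  obtain ⟨R, hR, he⟩ := Vu_rep (f := f) (lam := lam)
  obtain ⟨R', hR', he'⟩ := hR.nS_rep S
  refine ⟨R', hR'.wcongr (by omega), ?_⟩
  intro p hp
  have h1 : nS f (Vu f lam) p = nS f (fun q => -B f 2 q + R q) p := by
    rw [nS, nS]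
    rw [show sD f (Vu f lam) p = sD f (fun q => -B f 2 q + R q) p from by
      rw [sD, sD, Dx_congr_nhds (Filter.Eventually.of_forall he)]]
  have hB2 : DifferentiableAt ℝ (B f 2) p := diffAt_U S (contDiffOn_B S 2) hp
  have hRd : DifferentiableAt ℝ R p := diffAt_U S (hR.smooth S) hp
  rw [h1, nS_add (g := fun q => -B f 2 q) hB2.neg hRd, nS_neg hB2, he' p hp]
  rfl

end El

namespace El
open ElAux

variable {n : ℕ} {T : ℝ} {f : ℝ → ℝ → E n} {φ : ℝ → ℝ → ℝ} {lam : ℝ → ℝ} {P : E n}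

/-- the key evolution formula for the curvature -/
theorem main_base (S : Sol n T f φ lam P) :
    ∃ R, VS f lam 5 R ∧ ∀ p ∈ W T f,
      Pp f (Dt (B f 0)) p = ph φ p • B f 1 p - B f 4 p + R p := by
  obtain ⟨R1, hR1, he1⟩ := nSVu_rep S
  obtain ⟨R2, hR2, he2⟩ := hR1.nS_rep S
  obtain ⟨gV, hgV, hegV⟩ := VuB0_rep (f := f) (lam := lam)
  refine ⟨fun p => R2 p + gV p • B f 0 p, (hR2.wcongr (by omega)).add
    ((VS.smulB hgV 0).wcongr (by omega)), ?_⟩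
  intro p hp
  have hpU : p ∈ U f := hp.2
  have hnSV : ContDiffOn ℝ (⊤ : ℕ∞) (nS f (Vu f lam)) (U f) :=
    contDiffOn_nS S (contDiffOn_Vu S)
  -- step (a) : commutator applied to B 0 = ∂ₛ τ
  have ha : Dt (B f 0) p = sD f (Dt (tu f)) p
      + (⟪Vu f lam p, B f 0 p⟫ - sD f (ph φ) p) • B f 0 p := by
    rw [B_zero_eq]
    exact Dt_sD_comm S (contDiffOn_tu S) hp
  -- step (b) : substitute the evolution of τ
  have hb : sD f (Dt (tu f)) p
      = sD f (fun q => nS f (Vu f lam) q + ph φ q • B f 0 q) p := by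
    rw [sD, sD, Dx_congr_on (isOpen_W S) hp fun q hq => Dt_tu S hq]
  -- step (c) : expand
  have hc : sD f (fun q => nS f (Vu f lam) q + ph φ q • B f 0 q) p
      = sD f (nS f (Vu f lam)) p + (ph φ p • sD f (B f 0) p
        + sD f (ph φ) p • B f 0 p) := by
    rw [sD_add (h := fun q => ph φ q • B f 0 q) (diffAt_U S hnSV hpU)
      ((diffAt_U S (contDiffOn_ph S) hpU).smul (diffAt_U S (contDiffOn_B S 0) hpU)),
      sD_smul (diffAt_U S (contDiffOn_ph S) hpU) (diffAt_U S (contDiffOn_B S 0) hpU)]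
  -- project
  have hPp : Pp f (Dt (B f 0)) p
      = nS f (nS f (Vu f lam)) p + ph φ p • B f 1 p
        + ⟪Vu f lam p, B f 0 p⟫ • B f 0 p := by
    have e0 : Pp f (Dt (B f 0)) p = Dt (B f 0) p
        - ⟪Dt (B f 0) p, tu f p⟫ • tu f p := rfl
    rw [e0, ha, hb, hc]
    have n1 : ⟪sD f (nS f (Vu f lam)) p, tu f p⟫ = -⟪nS f (Vu f lam) p, B f 0 p⟫ :=
      inner_sD_tu S hnSV (fun q hq => inner_nS_tu hq) hpU
    have n2 : ⟪sD f (B f 0) p, tu f p⟫ = -⟪B f 0 p, B f 0 p⟫ :=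
      inner_sD_tu S (contDiffOn_B S 0) (fun q hq => inner_B_tu S 0 hq) hpU
    have n3 : ⟪B f 0 p, tu f p⟫ = 0 := inner_B_tu S 0 hpU
    have n4 : nS f (nS f (Vu f lam)) p = sD f (nS f (Vu f lam)) p
        + ⟪nS f (Vu f lam) p, B f 0 p⟫ • tu f p :=
      nS_eq_of_normal S hnSV (fun q hq => inner_nS_tu hq) hpU
    have n5 : B f 1 p = sD f (B f 0) p + ⟪B f 0 p, B f 0 p⟫ • tu f p := by
      have := sD_B_eq S 0 hpU
      rw [this]
      module
    rw [inner_add_left, inner_add_left, inner_add_left, inner_smul_left, inner_smul_left,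
      inner_smul_left]
    simp only [RCLike.star_def, conj_trivial]
    rw [n1, n2, n3, n4, n5]
    module
  rw [hPp]
  -- substitute the representation of ∇ₛ∇ₛV
  have hd : nS f (nS f (Vu f lam)) p = -B f 4 p + R2 p := by
    have h1 : nS f (nS f (Vu f lam)) p = nS f (fun q => -B f 3 q + R1 q) p := by
      rw [nS, nS]
      rw [show sD f (nS f (Vu f lam)) p = sD f (fun q => -B f 3 q + R1 q) p from by
        rw [sD, sD, Dx_congr_on (isOpen_U S) hpU he1]]
    have hB3 : DifferentiableAt ℝ (B f 3) p := diffAt_U S (contDiffOn_B S 3) hpU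
    have hRd : DifferentiableAt ℝ R1 p := diffAt_U S (hR1.smooth S) hpU
    rw [h1, nS_add (g := fun q => -B f 3 q) hB3.neg hRd, nS_neg hB3, he2 p hpU]
    rfl
  rw [hd, hegV p]
  module

end El

namespace El
open ElAux

variable {n : ℕ} {T : ℝ} {f : ℝ → ℝ → E n} {φ : ℝ → ℝ → ℝ} {lam : ℝ → ℝ} {P : E n}

/-- pointwise projection -/
def prj (f : ℝ → ℝ → E n) (p : ℝ × ℝ) (x : E n) : E n := x - ⟪x, tu f p⟫ • tu f p

theorem Pp_eq_prj (χ : ℝ × ℝ → E n) (p : ℝ × ℝ) : Pp f χ p = prj f p (χ p) := rfl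

theorem prj_add (p : ℝ × ℝ) (x y : E n) : prj f p (x + y) = prj f p x + prj f p y := by
  rw [prj, prj, prj, inner_add_left]; module

theorem prj_smul (p : ℝ × ℝ) (a : ℝ) (x : E n) : prj f p (a • x) = a • prj f p x := by
  rw [prj, prj, inner_smul_left]
  simp only [RCLike.star_def, conj_trivial]
  module

theorem prj_of_normal {p : ℝ × ℝ} {x : E n} (h : ⟪x, tu f p⟫ = 0) : prj f p x = x := by
  rw [prj, h]; module

theorem prj_tu_smul {p : ℝ × ℝ} (hp : p ∈ U f) (a : ℝ) : prj f p (a • tu f p) = 0 := by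
  rw [prj, inner_smul_left]
  simp only [RCLike.star_def, conj_trivial]
  rw [inner_tu_tu hp]
  module

theorem prj_tu {p : ℝ × ℝ} (hp : p ∈ U f) : prj f p (tu f p) = 0 := by
  rw [prj, inner_tu_tu hp]
  module

theorem Dt_inner_B_tu (S : Sol n T f φ lam P) (m : ℕ) {p : ℝ × ℝ} (hpU : p ∈ U f) :
    ⟪Dt (B f m) p, tu f p⟫ = -⟪B f m p, Dt (tu f) p⟫ := by
  have h1 : Dt (fun q => ⟪B f m q, tu f q⟫) p = Dt (fun _ : ℝ × ℝ => (0 : ℝ)) p :=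
    Dt_congr_on (isOpen_U S) hpU fun q hq => inner_B_tu S m hq
  rw [Dt_const] at h1
  have h2 := Dt_inner (diffAt_U S (contDiffOn_B S m) hpU)
    (diffAt_U S (contDiffOn_tu S) hpU)
  rw [h1] at h2
  linarith

/-- the inductive step for the evolution formula -/
theorem main_step (S : Sol n T f φ lam P) (m : ℕ)
    (IH : ∃ R, VS f lam (m + 5) R ∧ ∀ p ∈ W T f,
      Pp f (Dt (B f m)) p = ph φ p • B f (m + 1) p - B f (m + 4) p + R p) :
    ∃ R', VS f lam (m + 6) R' ∧ ∀ p ∈ W T f,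
      Pp f (Dt (B f (m + 1))) p
        = ph φ p • B f (m + 2) p - B f (m + 5) p + R' p := by
  obtain ⟨R, hR, heR⟩ := IH
  obtain ⟨R', hR', heR'⟩ := hR.nS_rep S
  obtain ⟨R1, hR1, he1⟩ := nSVu_rep S
  obtain ⟨gV, hgV, hegV⟩ := VuB0_rep (f := f) (lam := lam)
  refine ⟨fun p => R' p + gV p • B f (m + 1) p
      + ((-1 : ℝ) • (⟪B f m p, B f 0 p⟫ • B f 3 p) + ⟪B f m p, B f 0 p⟫ • R1 p)
      + (-1 : ℝ) • (((-1 : ℝ) * ⟪B f m p, B f 3 p⟫ + ⟪B f m p, R1 p⟫) • B f 0 p),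
    ?_, ?_⟩
  · have v1 : VS f lam (m + 6) R' := hR'.wcongr (by omega)
    have v2 : VS f lam (m + 6) (fun p => gV p • B f (m + 1) p) :=
      (VS.smulB hgV (m + 1)).wcongr (by omega)
    have v3 : VS f lam (m + 6)
        (fun p => (-1 : ℝ) • (⟪B f m p, B f 0 p⟫ • B f 3 p)) :=
      (VS.smul (-1) (VS.mon 3 (Sc.pair m 0))).wcongr (by omega)
    have v4 : VS f lam (m + 6) (fun p => ⟪B f m p, B f 0 p⟫ • R1 p) :=
      (VS.smulSc (Sc.pair m 0) hR1).wcongr (by omega)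
    have v5s : ScS f lam (m + 5)
        (fun p => (-1 : ℝ) * ⟪B f m p, B f 3 p⟫ + ⟪B f m p, R1 p⟫) :=
      ScS.add ((ScS.smul (-1) (ScS.of (Sc.pair m 3))).wcongr (by omega))
        ((ScS.innerB m hR1).wcongr (by omega))
    have v5 : VS f lam (m + 6) (fun p => (-1 : ℝ)
        • (((-1 : ℝ) * ⟪B f m p, B f 3 p⟫ + ⟪B f m p, R1 p⟫) • B f 0 p)) :=
      VS.smul (-1) ((VS.smulB v5s 0).wcongr (by omega))
    exact ((v1.add v2).add (v3.add v4)).add v5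
  intro p hp
  have hpU : p ∈ U f := hp.2
  have hDtBm : ContDiffOn ℝ (⊤ : ℕ∞) (Dt (B f m)) (U f) :=
    contDiffOn_Dt (isOpen_U S) (contDiffOn_B S m)
  have hPpDt : ContDiffOn ℝ (⊤ : ℕ∞) (Pp f (Dt (B f m))) (U f) := contDiffOn_Pp S hDtBm
  have hInner : ContDiffOn ℝ (⊤ : ℕ∞) (fun q => ⟪Dt (B f m) q, tu f q⟫) (U f) :=
    ContDiffOn.inner ℝ hDtBm (contDiffOn_tu S)
  have hBm := contDiffOn_B S m
  have hB0 := contDiffOn_B S 0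
  have htuS := contDiffOn_tu S
  -- (a) expand `B (m+1)` before differentiating in time
  have ha : Dt (B f (m + 1)) p
      = Dt (fun q => sD f (B f m) q + ⟪B f m q, B f 0 q⟫ • tu f q) p := by
    refine Dt_congr_on (isOpen_U S) hpU fun q hq => ?_
    rw [B_succ_eq]
    exact nS_eq_of_normal S hBm (fun q' hq' => inner_B_tu S m hq') hq
  -- (b) product and sum rules
  have hb : Dt (fun q => sD f (B f m) q + ⟪B f m q, B f 0 q⟫ • tu f q) p
      = Dt (sD f (B f m)) p + (⟪B f m p, B f 0 p⟫ • Dt (tu f) p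
        + Dt (fun q => ⟪B f m q, B f 0 q⟫) p • tu f p) := by
    rw [Dt_add (g' := fun q => ⟪B f m q, B f 0 q⟫ • tu f q) (diffAt_U S (contDiffOn_sD S hBm) hpU)
      ((diffAt_U S (ContDiffOn.inner ℝ hBm hB0) hpU).smul (diffAt_U S htuS hpU)),
      Dt_smul (diffAt_U S (ContDiffOn.inner ℝ hBm hB0) hpU) (diffAt_U S htuS hpU)]
  -- (c) commutator
  have hc : Dt (sD f (B f m)) p = sD f (Dt (B f m)) p
      + (⟪Vu f lam p, B f 0 p⟫ - sD f (ph φ) p) • sD f (B f m) p :=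
    Dt_sD_comm S hBm hp
  -- (d) split `∂ₜ B m` into normal and tangential parts before `∂ₛ`
  have hdec : Dt (B f m) = fun q => Pp f (Dt (B f m)) q
      + ⟪Dt (B f m) q, tu f q⟫ • tu f q := by
    funext q
    rw [Pp]
    module
  have hd : sD f (Dt (B f m)) p = sD f (Pp f (Dt (B f m))) p
      + (⟪Dt (B f m) p, tu f p⟫ • B f 0 p
        + sD f (fun q => ⟪Dt (B f m) q, tu f q⟫) p • tu f p) := by
    conv_lhs => rw [hdec]
    rw [sD_add (h := fun q => ⟪Dt (B f m) q, tu f q⟫ • tu f q) (diffAt_U S hPpDt hpU)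
      ((diffAt_U S hInner hpU).smul (diffAt_U S htuS hpU)),
      sD_smul (diffAt_U S hInner hpU) (diffAt_U S htuS hpU)]
    rfl
  -- assemble and project
  have hE : Dt (B f (m + 1)) p
      = sD f (Pp f (Dt (B f m)) ) p
        + ⟪Dt (B f m) p, tu f p⟫ • B f 0 p
        + sD f (fun q => ⟪Dt (B f m) q, tu f q⟫) p • tu f p
        + (⟪Vu f lam p, B f 0 p⟫ - sD f (ph φ) p) • sD f (B f m) p
        + ⟪B f m p, B f 0 p⟫ • Dt (tu f) p
        + Dt (fun q => ⟪B f m q, B f 0 q⟫) p • tu f p := by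
    rw [ha, hb, hc, hd]
    module
  have hPp : Pp f (Dt (B f (m + 1))) p
      = nS f (Pp f (Dt (B f m))) p
        + ⟪Dt (B f m) p, tu f p⟫ • B f 0 p
        + (⟪Vu f lam p, B f 0 p⟫ - sD f (ph φ) p) • B f (m + 1) p
        + ⟪B f m p, B f 0 p⟫ • (nS f (Vu f lam) p + ph φ p • B f 0 p) := by
    rw [Pp_eq_prj, hE]
    simp only [prj_add, prj_smul]
    rw [prj_tu hpU]
    have e1 : prj f p (sD f (Pp f (Dt (B f m))) p) = nS f (Pp f (Dt (B f m))) p := rfl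
    have e2 : prj f p (B f 0 p) = B f 0 p := prj_of_normal (inner_B_tu S 0 hpU)
    have e3 : prj f p (sD f (B f m) p) = B f (m + 1) p := by
      have : prj f p (sD f (B f m) p) = nS f (B f m) p := rfl
      rw [this, ← B_succ_eq]
    have e4 : prj f p (Dt (tu f) p) = nS f (Vu f lam) p + ph φ p • B f 0 p := by
      rw [Dt_tu S hp]
      refine prj_of_normal ?_
      rw [inner_add_left, inner_nS_tu hpU, inner_smul_left]
      simp only [RCLike.star_def, conj_trivial]
      rw [inner_B_tu S 0 hpU]
      ring
    rw [e1, e2, e3, e4]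
    module
  -- substitute the inductive hypothesis under `∇ₛ`
  have hf1 : nS f (Pp f (Dt (B f m))) p
      = nS f (fun q => ph φ q • B f (m + 1) q - B f (m + 4) q + R q) p := by
    rw [nS, nS]
    rw [show sD f (Pp f (Dt (B f m))) p
        = sD f (fun q => ph φ q • B f (m + 1) q - B f (m + 4) q + R q) p from by
      rw [sD, sD, Dx_congr_on (isOpen_W S) hp heR]]
  have hf2 : nS f (fun q => ph φ q • B f (m + 1) q - B f (m + 4) q + R q) p
      = (ph φ p • B f (m + 2) p + sD f (ph φ) p • B f (m + 1) p)
        - B f (m + 5) p + R' p := by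
    have d1 : DifferentiableAt ℝ (fun q => ph φ q • B f (m + 1) q) p :=
      (diffAt_U S (contDiffOn_ph S) hpU).smul (diffAt_U S (contDiffOn_B S (m + 1)) hpU)
    have d2 : DifferentiableAt ℝ (B f (m + 4)) p := diffAt_U S (contDiffOn_B S (m + 4)) hpU
    have d3 : DifferentiableAt ℝ R p := diffAt_U S (hR.smooth S) hpU
    rw [nS_add (g := fun q => ph φ q • B f (m + 1) q - B f (m + 4) q) (d1.sub d2) d3,
      nS_sub (g := fun q => ph φ q • B f (m + 1) q) d1 d2]
    have e5 : nS f (fun q => ph φ q • B f (m + 1) q) p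
        = ph φ p • B f (m + 2) p + sD f (ph φ) p • B f (m + 1) p := by
      rw [nS_smul_of_normal S hpU (diffAt_U S (contDiffOn_ph S) hpU)
        (diffAt_U S (contDiffOn_B S (m + 1)) hpU) (inner_B_tu S (m + 1) hpU)]
      rw [← B_succ_eq]
    rw [e5, ← B_succ_eq, heR' p hpU]
  -- tangential coefficient
  have htan : ⟪Dt (B f m) p, tu f p⟫
      = -(⟪B f m p, nS f (Vu f lam) p⟫ + ph φ p * ⟪B f m p, B f 0 p⟫) := by
    rw [Dt_inner_B_tu S m hpU, Dt_tu S hp, inner_add_right, inner_smul_right]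
  rw [hPp, hf1, hf2, htan, he1 p hpU]
  rw [show ⟪B f m p, -B f 3 p + R1 p⟫ = (-1 : ℝ) * ⟪B f m p, B f 3 p⟫
      + ⟪B f m p, R1 p⟫ from by rw [inner_add_right, inner_neg_right]; ring]
  rw [hegV p]
  module

end El

namespace El
open ElAux

variable {n : ℕ} {T : ℝ} {f : ℝ → ℝ → E n} {φ : ℝ → ℝ → ℝ} {lam : ℝ → ℝ} {P : E n}

theorem main_formula (S : Sol n T f φ lam P) (m : ℕ) :
    ∃ R, VS f lam (m + 5) R ∧ ∀ p ∈ W T f,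
      Pp f (Dt (B f m)) p = ph φ p • B f (m + 1) p - B f (m + 4) p + R p := by
  induction m with
  | zero => exact main_base S
  | succ m ih => exact main_step S m ih

theorem mem_U_t1 (S : Sol n T f φ lam P) {t : ℝ} (ht : t ∈ Ioo (0 : ℝ) T) :
    ((t, 1) : ℝ × ℝ) ∈ U f :=
  mem_U_of_Icc S ⟨le_of_lt ht.1, ht.2⟩ ⟨zero_le_one, le_refl 1⟩

theorem Dt_fh_zero (S : Sol n T f φ lam P) {t : ℝ} (ht : t ∈ Ioo (0 : ℝ) T) :
    Dt (fh f) (t, 1) = 0 := by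
  have hev : (fun s => fh f (s, 1)) =ᶠ[nhds t] fun _ => P := by
    filter_upwards [isOpen_Ioo.mem_nhds ht] with s hs
    exact S.hfix s ⟨le_of_lt hs.1, hs.2⟩
  have := hev.deriv_eq
  rw [deriv_const] at this
  exact this

theorem phi_zero_and_B2_zero (S : Sol n T f φ lam P) {t : ℝ} (ht : t ∈ Ioo (0 : ℝ) T) :
    ph φ (t, 1) = 0 ∧ B f 2 (t, 1) = 0 := by
  have hU : ((t, 1) : ℝ × ℝ) ∈ U f := mem_U_t1 S ht
  have hB0 : B f 0 (t, 1) = 0 := S.hcurv t ⟨le_of_lt ht.1, ht.2⟩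
  have hflow0 : Dt (fh f) (t, 1)
      = -B f 2 (t, 1) + lam t • B f 0 (t, 1)
        - ((1 / 2 : ℝ) * ‖B f 0 (t, 1)‖ ^ 2) • B f 0 (t, 1)
        + ph φ (t, 1) • tu f (t, 1) :=
    S.hflow t ⟨le_of_lt ht.1, ht.2⟩ 1 ⟨zero_le_one, le_refl 1⟩
  rw [Dt_fh_zero S ht, hB0, smul_zero, smul_zero] at hflow0
  have hB2 : B f 2 (t, 1) = ph φ (t, 1) • tu f (t, 1) := by
    linear_combination (norm := module) hflow0
  have hphi : ph φ (t, 1) = 0 := by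
    have h3 : ⟪B f 2 (t, 1), tu f (t, 1)⟫ = 0 := inner_B_tu S 2 hU
    rw [hB2, inner_smul_left] at h3
    simp only [RCLike.star_def, conj_trivial] at h3
    rw [inner_tu_tu hU, mul_one] at h3
    exact h3
  refine ⟨hphi, ?_⟩
  rw [hB2, hphi, zero_smul]

/-- extension of an identity from `W` to the boundary point `(t,1)` -/
theorem eq_at_boundary (S : Sol n T f φ lam P) {χ ξ : ℝ × ℝ → E n}
    (hχ : ContDiffOn ℝ (⊤ : ℕ∞) χ (U f)) (hξ : ContDiffOn ℝ (⊤ : ℕ∞) ξ (U f))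
    (heq : ∀ p ∈ W T f, χ p = ξ p) {t : ℝ} (ht : t ∈ Ioo (0 : ℝ) T) :
    χ (t, 1) = ξ (t, 1) := by
  have hU : ((t, 1) : ℝ × ℝ) ∈ U f := mem_U_t1 S ht
  have hUopen := isOpen_U S
  have hcont : ContinuousAt (fun x : ℝ => ((t, x) : ℝ × ℝ)) 1 :=
    (continuous_const.prodMk continuous_id).continuousAt
  have hev : ∀ᶠ x in nhds (1 : ℝ), ((t, x) : ℝ × ℝ) ∈ U f :=
    hcont.preimage_mem_nhds (hUopen.mem_nhds hU)
  have hIoo : Ioo (0 : ℝ) 1 ∈ nhdsWithin (1 : ℝ) (Iio 1) :=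
    Ioo_mem_nhdsLT_of_mem ⟨zero_lt_one, le_refl 1⟩
  have hev2 : ∀ᶠ x in nhdsWithin (1 : ℝ) (Iio 1), ((t, x) : ℝ × ℝ) ∈ W T f := by
    filter_upwards [nhdsWithin_le_nhds hev, hIoo] with x hx1 hx2
    exact ⟨⟨ht, hx2⟩, hx1⟩
  have hδ : Filter.Tendsto (fun x : ℝ => ((t, x) : ℝ × ℝ))
      (nhdsWithin (1 : ℝ) (Iio 1)) (nhds ((t, 1) : ℝ × ℝ)) :=
    hcont.tendsto.mono_left nhdsWithin_le_nhds
  have h1 : Filter.Tendsto (fun x : ℝ => χ (t, x)) (nhdsWithin (1 : ℝ) (Iio 1))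
      (nhds (χ (t, 1))) :=
    ((hχ.contDiffAt (hUopen.mem_nhds hU)).continuousAt.tendsto).comp hδ
  have h2 : Filter.Tendsto (fun x : ℝ => ξ (t, x)) (nhdsWithin (1 : ℝ) (Iio 1))
      (nhds (ξ (t, 1))) :=
    ((hξ.contDiffAt (hUopen.mem_nhds hU)).continuousAt.tendsto).comp hδ
  have hcongr : (fun x : ℝ => χ (t, x)) =ᶠ[nhdsWithin (1 : ℝ) (Iio 1)]
      fun x : ℝ => ξ (t, x) := by
    filter_upwards [hev2] with x hx using heq _ hx
  exact tendsto_nhds_unique (h1.congr' hcongr) h2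

theorem B_even_zero (S : Sol n T f φ lam P) :
    ∀ l : ℕ, ∀ t ∈ Ioo (0 : ℝ) T, ∀ j ≤ l + 1, B f (2 * j) (t, 1) = 0 := by
  intro l
  induction l with
  | zero =>
    intro t ht j hj
    interval_cases j
    · exact S.hcurv t ⟨le_of_lt ht.1, ht.2⟩
    · exact (phi_zero_and_B2_zero S ht).2
  | succ l ih =>
    intro t ht j hj
    rcases Nat.lt_or_ge j (l + 2) with hj2 | hj2
    · exact ih t ht j (by omega)
    · have hjeq : j = l + 2 := by omega
      subst hjeq
      obtain ⟨R, hR, heR⟩ := main_formula S (2 * l)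
      have hχ : ContDiffOn ℝ (⊤ : ℕ∞) (Pp f (Dt (B f (2 * l)))) (U f) :=
        contDiffOn_Pp S (contDiffOn_Dt (isOpen_U S) (contDiffOn_B S (2 * l)))
      have hξ : ContDiffOn ℝ (⊤ : ℕ∞)
          (fun p => ph φ p • B f (2 * l + 1) p - B f (2 * l + 4) p + R p) (U f) :=
        (((contDiffOn_ph S).smul (contDiffOn_B S (2 * l + 1))).sub
          (contDiffOn_B S (2 * l + 4))).add (hR.smooth S)
      have heq := eq_at_boundary S hχ hξ heR ht
      have hDt0 : Dt (B f (2 * l)) (t, 1) = 0 := by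
        have hev : (fun s => B f (2 * l) (s, 1)) =ᶠ[nhds t] fun _ => (0 : E n) := by
          filter_upwards [isOpen_Ioo.mem_nhds ht] with s hs
          exact ih s hs l (by omega)
        have := hev.deriv_eq
        rw [deriv_const] at this
        exact this
      have hPp0 : Pp f (Dt (B f (2 * l))) (t, 1) = 0 := by
        rw [Pp, hDt0]
        simp
      have hphi0 : ph φ (t, 1) = 0 := (phi_zero_and_B2_zero S ht).1
      have hR0 : R (t, 1) = 0 := by
        refine hR.eval (l := l) (fun j' hj' => ih t ht j' (by omega)) ⟨l + 2, by omega⟩ (by omega)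
      rw [hPp0, hphi0, hR0, zero_smul] at heq
      have : B f (2 * l + 4) (t, 1) = 0 := by
        have h4 : (0 : E n) = -B f (2 * l + 4) (t, 1) := by
          rw [heq]
          module
        have := h4.symm
        rwa [neg_eq_zero] at this
      rw [show 2 * (l + 2) = 2 * l + 4 by omega]
      exact this

end El


/-- At a fixed end-point of the elastic flow, all even-order normal derivatives of the
curvature vanish, and the tangential component vanishes. -/
theorem even_curvature_derivatives_vanish {n : ℕ} (hn : 2 ≤ n) (T : ℝ) (hT : 0 < T)
    (f : ℝ → ℝ → EuclideanSpace ℝ (Fin n)) (φ : ℝ → ℝ → ℝ) (lam : ℝ → ℝ)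
    (P : EuclideanSpace ℝ (Fin n))
    (hf : ContDiff ℝ (⊤ : ℕ∞) (Function.uncurry f))
    (hφ : ContDiff ℝ (⊤ : ℕ∞) (Function.uncurry φ))
    (hlam : ContDiff ℝ (⊤ : ℕ∞) lam)
    (hreg : ∀ t ∈ Ico (0 : ℝ) T, ∀ x ∈ Icc (0 : ℝ) 1, deriv (f t) x ≠ 0)
    (hflow : ∀ t ∈ Ico (0 : ℝ) T, ∀ x ∈ Icc (0 : ℝ) 1,
      pT f t x
        = -nablaS (f t) (nablaS (f t) (kappa (f t))) x
          + lam t • kappa (f t) x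
          - ((1 / 2 : ℝ) * ‖kappa (f t) x‖ ^ 2) • kappa (f t) x
          + φ t x • tau (f t) x)
    (hfix : ∀ t ∈ Ico (0 : ℝ) T, f t 1 = P)
    (hcurv : ∀ t ∈ Ico (0 : ℝ) T, kappa (f t) 1 = 0) :
    ∀ t ∈ Ioo (0 : ℝ) T,
      φ t 1 = 0 ∧ ∀ l : ℕ, nablaSIter (f t) (2 * l) (kappa (f t)) 1 = 0 := by
  have S : El.Sol n T f φ lam P :=
    ⟨hT, hf, hφ, hlam, hreg, hflow, hfix, hcurv⟩
  intro t ht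
  constructor
  · exact (El.phi_zero_and_B2_zero S ht).1
  · intro l
    exact El.B_even_zero S l t ht l (by omega)
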